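/- arXiv:1211.5640 — 5 statements merged into one kernel-verified Lean document; each statement's English description precedes it below -/
import Mathlib

section
/- Every graph G contains a vertex set S such that (1) S is matchable to the set of components of G−S (i.e., the bipartite graph obtained by contracting each component of G−S to a single vertex and deleting edges inside S has a matching saturating S), and (2) every component of G−S is factor-critical. Moreover, for any such S, G has a perfect matching if and only if |S| equals the number of components of G−S. -/
open SimpleGraph

/-- A graph is factor-critical if deleting any vertex leaves a graph with a perfect matching. -/
def FactorCritical {V : Type} (G : SimpleGraph V) : Prop :=
  ∀ v : V, ∃ M : G.Subgraph, M.IsMatching ∧ M.verts = {v}ᶜ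

/-- `S` is matchable to the components of `G - S`: the bipartite graph obtained by
contracting each component of `G - S` to a single vertex (and deleting edges inside `S`)
has a matching saturating `S`; equivalently there is an injective assignment of a distinct
component to each vertex of `S` containing one of its neighbors. -/
def MatchableToComponents {V : Type} (G : SimpleGraph V) (S : Set V) : Prop :=
  ∃ φ : S → (G.induce Sᶜ).ConnectedComponent, Function.Injective φ ∧
    ∀ s : S, ∃ w : ↥(Sᶜ : Set V), (G.induce Sᶜ).connectedComponentMk w = φ s ∧ G.Adj s w

/-- Every component of `G - S` is factor-critical. -/
def AllComponentsFactorCritical {V : Type} (G : SimpleGraph V) (S : Set V) : Prop :=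
  ∀ C : (G.induce Sᶜ).ConnectedComponent,
    FactorCritical ((G.induce Sᶜ).induce {v | (G.induce Sᶜ).connectedComponentMk v = C})

namespace GEAux
variable {V : Type} {G : SimpleGraph V}

variable {V : Type} {G : SimpleGraph V}

/-- `K` is (the vertex set of) a connected component of `G.induce A`. -/
def IsCompOf (G : SimpleGraph V) (K A : Set V) : Prop :=
  K.Nonempty ∧ ∃ hKA : K ⊆ A,
    (∀ v w (hv : v ∈ K) (hw : w ∈ K), (G.induce A).Reachable ⟨v, hKA hv⟩ ⟨w, hKA hw⟩) ∧
    ∀ ⦃v w : V⦄, v ∈ K → w ∈ A → G.Adj v w → w ∈ K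

lemma IsCompOf.subset {K A : Set V} (h : IsCompOf G K A) : K ⊆ A := h.2.choose

lemma reach_closed {A : Set V} {P : V → Prop}
    (hP : ∀ a b, a ∈ A → b ∈ A → G.Adj a b → P a → P b) {u w : ↥A}
    (h : (G.induce A).Reachable u w) (hu : P u.val) : P w.val := by
  obtain ⟨p⟩ := h
  induction p with
  | nil => exact hu
  | @cons a b c h' p ih => exact ih (hP a.val b.val a.2 b.2 h' hu)

lemma reach_shrink {B B' : Set V} (hss : B' ⊆ B)
    (hcl : ∀ a b, a ∈ B → b ∈ B → G.Adj a b → a ∈ B' → b ∈ B') {u w : ↥B}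
    (h : (G.induce B).Reachable u w) (hu : u.val ∈ B') :
    ∃ hw : w.val ∈ B', (G.induce B').Reachable ⟨u.val, hu⟩ ⟨w.val, hw⟩ := by
  obtain ⟨p⟩ := h
  induction p with
  | nil => exact ⟨hu, Reachable.refl _⟩
  | @cons a b c h' p ih =>
    have hb : b.val ∈ B' := hcl a.val b.val a.2 b.2 h' hu
    obtain ⟨hw, hr⟩ := ih hb
    exact ⟨hw, Reachable.trans ⟨Walk.cons (by simpa using (by simpa using h' : G.Adj a.val b.val))
      Walk.nil⟩ hr⟩

/-- Vertex set (in `V`) of a connected component of `G.induce A`. -/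
def csuppV {A : Set V} (C : (G.induce A).ConnectedComponent) : Set V := Subtype.val '' C.supp

lemma mem_csuppV {A : Set V} {C : (G.induce A).ConnectedComponent} {v : V} :
    v ∈ csuppV C ↔ ∃ h : v ∈ A, (G.induce A).connectedComponentMk ⟨v, h⟩ = C := by
  constructor
  · rintro ⟨⟨x, hx⟩, hx2, rfl⟩; exact ⟨hx, hx2⟩
  · rintro ⟨h, h2⟩; exact ⟨⟨v, h⟩, h2, rfl⟩

lemma csuppV_isCompOf {A : Set V} (C : (G.induce A).ConnectedComponent) :
    IsCompOf G (csuppV C) A := by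
  obtain ⟨x, hx⟩ := C.exists_rep
  refine ⟨⟨x.val, mem_csuppV.2 ⟨x.2, hx⟩⟩, fun v hv => (mem_csuppV.1 hv).choose, ?_, ?_⟩
  · intro v w hv hw
    obtain ⟨hv1, hv2⟩ := mem_csuppV.1 hv
    obtain ⟨hw1, hw2⟩ := mem_csuppV.1 hw
    exact ConnectedComponent.exact (hv2.trans hw2.symm)
  · intro v w hv hw hadj
    obtain ⟨hv1, hv2⟩ := mem_csuppV.1 hv
    refine mem_csuppV.2 ⟨hw, ?_⟩
    rw [← hv2]
    exact ConnectedComponent.sound (Reachable.symm ⟨Walk.cons (by simpa) Walk.nil⟩)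

lemma IsCompOf.eq_csuppV {K A : Set V} (h : IsCompOf G K A) {v : V} (hv : v ∈ K) :
    K = csuppV ((G.induce A).connectedComponentMk ⟨v, h.subset hv⟩) := by
  obtain ⟨hne, hKA, hreach, hcl⟩ := h
  ext w
  simp only [mem_csuppV]
  constructor
  · intro hw
    exact ⟨hKA hw, (ConnectedComponent.sound (hreach w v hw hv))⟩
  · rintro ⟨hw, hw2⟩
    have := ConnectedComponent.exact hw2
    exact reach_closed (P := (· ∈ K)) (fun a b _ hb hadj ha => hcl ha hb hadj) this.symm hv

lemma IsCompOf.eq_of_mem {K K' A : Set V} (h : IsCompOf G K A) (h' : IsCompOf G K' A)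
    {v : V} (hv : v ∈ K) (hv' : v ∈ K') : K = K' := by
  rw [h.eq_csuppV hv, h'.eq_csuppV hv']

/-- The components of `G.induce A` are in bijection with the sets `IsCompOf`. -/
noncomputable def compEquiv (G : SimpleGraph V) (A : Set V) :
    (G.induce A).ConnectedComponent ≃ {K : Set V // IsCompOf G K A} where
  toFun C := ⟨csuppV C, csuppV_isCompOf C⟩
  invFun K := (G.induce A).connectedComponentMk
    ⟨K.2.1.choose, K.2.subset K.2.1.choose_spec⟩
  left_inv C := by
    have h := (csuppV_isCompOf C).1.choose_spec
    obtain ⟨h1, h2⟩ := mem_csuppV.1 h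
    exact h2
  right_inv K := by
    ext1
    exact (K.2.eq_csuppV K.2.1.choose_spec).symm

lemma compEquiv_symm_mk {A : Set V} {K : Set V} (hK : IsCompOf G K A) {v : V} (hv : v ∈ K) :
    (compEquiv G A).symm ⟨K, hK⟩ = (G.induce A).connectedComponentMk ⟨v, hK.subset hv⟩ := by
  rw [Equiv.symm_apply_eq]
  ext1
  exact hK.eq_csuppV hv

lemma reach_mono {B B' : Set V} (h : B ⊆ B') {u w : ↥B}
    (hr : (G.induce B).Reachable u w) :
    (G.induce B').Reachable ⟨u.val, h u.2⟩ ⟨w.val, h w.2⟩ :=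
  hr.map (G.induceHomOfLE h).toHom

lemma exists_comp {A : Set V} {v : V} (hv : v ∈ A) : ∃ K, IsCompOf G K A ∧ v ∈ K :=
  ⟨csuppV ((G.induce A).connectedComponentMk ⟨v, hv⟩), csuppV_isCompOf _,
    mem_csuppV.2 ⟨hv, rfl⟩⟩

/-- Number of odd components of `G.induce A`. -/
noncomputable def qOdd (G : SimpleGraph V) (A : Set V) : ℕ :=
  {K : Set V | IsCompOf G K A ∧ Odd K.ncard}.ncard

variable [Fintype V]

lemma ncard_eq_sum_comps (G : SimpleGraph V) (A : Set V) :
    A.ncard = ∑ K ∈ (Set.toFinite {K : Set V | IsCompOf G K A}).toFinset, K.ncard := by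
  classical
  have hA : A.toFinset = (Set.toFinite {K : Set V | IsCompOf G K A}).toFinset.biUnion
      (fun K => K.toFinset) := by
    ext v
    simp only [Set.mem_toFinset, Finset.mem_biUnion, Set.Finite.mem_toFinset, Set.mem_setOf_eq]
    constructor
    · intro hv
      obtain ⟨K, h1, h2⟩ := exists_comp hv
      exact ⟨K, h1, by simpa using h2⟩
    · rintro ⟨K, h1, h2⟩
      exact h1.subset (by simpa using h2)
  have : A.toFinset.card = ∑ K ∈ (Set.toFinite {K : Set V | IsCompOf G K A}).toFinset,
      K.toFinset.card := by
    rw [hA]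
    apply Finset.card_biUnion
    intro x hx y hy hxy
    simp only [Finset.mem_coe, Set.Finite.mem_toFinset, Set.mem_setOf_eq] at hx hy
    rw [Function.onFun, Finset.disjoint_left]
    intro a ha ha'
    simp only [Set.mem_toFinset] at ha ha'
    exact hxy (hx.eq_of_mem hy ha ha')
  rw [Set.ncard_eq_toFinset_card', this]
  exact Finset.sum_congr rfl fun K _ => (Set.ncard_eq_toFinset_card' K).symm

lemma qOdd_modEq (G : SimpleGraph V) (A : Set V) : qOdd G A ≡ A.ncard [MOD 2] := by
  classical
  have h1 : qOdd G A = ((Set.toFinite {K : Set V | IsCompOf G K A}).toFinset.filter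
      (fun K => Odd K.ncard)).card := by
    rw [qOdd, Set.ncard_eq_toFinset_card']
    congr 1
    ext K
    simp [Set.mem_toFinset, Set.Finite.mem_toFinset]
  rw [Nat.ModEq, h1, Finset.card_filter, ncard_eq_sum_comps G A]
  conv_rhs => rw [Finset.sum_nat_mod]
  congr 1
  apply Finset.sum_congr rfl
  intro K _
  by_cases h : Odd K.ncard
  · simp [h, Nat.odd_iff.1 h]
  · simp [h, Nat.not_odd_iff.1 h]

lemma one_le_qOdd {A : Set V} (h : Odd A.ncard) : 1 ≤ qOdd G A := by
  have := qOdd_modEq G A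
  rcases Nat.eq_zero_or_pos (qOdd G A) with h0 | h0
  · rw [Nat.ModEq, h0] at this
    exact absurd (Nat.odd_iff.1 h) (by omega)
  · exact h0

lemma isCompOf_diff_iff {A C D K : Set V} (hC : IsCompOf G C A) (hD : D ⊆ C) :
    IsCompOf G K (A \ D) ↔ (IsCompOf G K A ∧ K ≠ C) ∨ IsCompOf G K (C \ D) := by
  constructor
  · intro hK
    by_cases hKC : ∃ x, x ∈ K ∧ x ∈ C
    · right
      obtain ⟨x, hxK, hxC⟩ := hKC
      obtain ⟨hne, hKA, hreach, hcl⟩ := hK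
      have hKsub : K ⊆ C \ D := by
        intro y hy
        refine ⟨?_, (hKA hy).2⟩
        exact reach_closed (P := (· ∈ C))
          (fun a b ha hb hadj haC => hC.2.choose_spec.2 haC hb.1 hadj)
          (hreach x y hxK hy) hxC
      refine ⟨hne, hKsub, ?_, ?_⟩
      · intro v w hv hw
        obtain ⟨hw', hr⟩ := reach_shrink (Set.diff_subset_diff_left hC.subset)
          (fun a b ha hb hadj haCD => ⟨hC.2.choose_spec.2 haCD.1 hb.1 hadj, hb.2⟩)
          (hreach v w hv hw) (hKsub hv)
        exact hr
      · intro v w hv hw hadj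
        exact hcl hv ⟨hC.subset hw.1, hw.2⟩ hadj
    · left
      push_neg at hKC
      obtain ⟨hne, hKA, hreach, hcl⟩ := hK
      have hKsub : K ⊆ A := fun y hy => (hKA hy).1
      refine ⟨⟨hne, hKsub, ?_, ?_⟩, ?_⟩
      · intro v w hv hw
        exact reach_mono Set.diff_subset (hreach v w hv hw)
      · intro v w hv hw hadj
        have hwD : w ∉ D := by
          intro hwD
          exact hKC v hv (hC.2.choose_spec.2 (hD hwD) (hKsub hv) hadj.symm)
        exact hcl hv ⟨hw, hwD⟩ hadj
      · rintro rfl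
        obtain ⟨x, hx⟩ := hne
        exact hKC x hx hx
  · rintro (⟨hK, hne⟩ | hK)
    · have hdisj : ∀ x, x ∈ K → x ∉ C := by
        intro x hx hxC
        exact hne (hK.eq_of_mem hC hx hxC)
      have hKsub : K ⊆ A \ D := fun y hy => ⟨hK.subset hy, fun hD' => hdisj y hy (hD hD')⟩
      obtain ⟨hne', hKA, hreach, hcl⟩ := hK
      refine ⟨hne', hKsub, ?_, ?_⟩
      · intro v w hv hw
        have h2 := reach_shrink (B' := K) hKA (fun a b ha hb hadj haK => hcl haK hb hadj)
          (hreach v w hv hw) hv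
        obtain ⟨hw', hr⟩ := h2
        exact reach_mono hKsub hr
      · intro v w hv hw hadj
        exact hcl hv hw.1 hadj
    · obtain ⟨hne', hKCD, hreach, hcl⟩ := hK
      have hKsub : K ⊆ A \ D := fun y hy => ⟨hC.subset (hKCD hy).1, (hKCD hy).2⟩
      refine ⟨hne', hKsub, ?_, ?_⟩
      · intro v w hv hw
        exact reach_mono (Set.diff_subset_diff_left hC.subset) (hreach v w hv hw)
      · intro v w hv hw hadj
        exact hcl hv ⟨hC.2.choose_spec.2 (hKCD hv).1 hw.1 hadj, hw.2⟩ hadj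

lemma qOdd_diff {A C D : Set V} (hC : IsCompOf G C A) (hD : D ⊆ C) :
    qOdd G (A \ D) + (if Odd C.ncard then 1 else 0) = qOdd G A + qOdd G (C \ D) := by
  classical
  have hsplit : {K : Set V | IsCompOf G K (A \ D) ∧ Odd K.ncard} =
      ({K : Set V | IsCompOf G K A ∧ Odd K.ncard} \ {C}) ∪
      {K : Set V | IsCompOf G K (C \ D) ∧ Odd K.ncard} := by
    ext K
    simp only [Set.mem_union, Set.mem_diff, Set.mem_setOf_eq, Set.mem_singleton_iff]
    constructor
    · rintro ⟨hK, hodd⟩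
      rcases (isCompOf_diff_iff hC hD).1 hK with (⟨h1, h2⟩ | h1)
      · exact Or.inl ⟨⟨h1, hodd⟩, h2⟩
      · exact Or.inr ⟨h1, hodd⟩
    · rintro (⟨⟨h1, hodd⟩, h2⟩ | ⟨h1, hodd⟩)
      · exact ⟨(isCompOf_diff_iff hC hD).2 (Or.inl ⟨h1, h2⟩), hodd⟩
      · exact ⟨(isCompOf_diff_iff hC hD).2 (Or.inr h1), hodd⟩
  have hdisj : Disjoint ({K : Set V | IsCompOf G K A ∧ Odd K.ncard} \ {C})
      {K : Set V | IsCompOf G K (C \ D) ∧ Odd K.ncard} := by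
    rw [Set.disjoint_left]
    rintro K ⟨⟨hK, _⟩, hne⟩ ⟨hK', _⟩
    obtain ⟨x, hx⟩ := hK'.1
    exact hne (hK.eq_of_mem hC hx (hK'.subset hx).1)
  have h1 : qOdd G (A \ D) =
      ({K : Set V | IsCompOf G K A ∧ Odd K.ncard} \ {C}).ncard + qOdd G (C \ D) := by
    rw [qOdd, hsplit, Set.ncard_union_eq hdisj]
    rfl
  rw [h1]
  simp only [qOdd]
  by_cases hodd : Odd C.ncard
  · have hCmem : C ∈ {K : Set V | IsCompOf G K A ∧ Odd K.ncard} := ⟨hC, hodd⟩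
    rw [if_pos hodd]
    have h2 := Set.ncard_diff_singleton_add_one hCmem (Set.toFinite _)
    omega
  · rw [if_neg hodd]
    have h2 : {K : Set V | IsCompOf G K A ∧ Odd K.ncard} \ {C} =
        {K : Set V | IsCompOf G K A ∧ Odd K.ncard} := by
      apply Set.diff_singleton_eq_self
      exact fun h => hodd h.2
    rw [h2]
    omega

lemma qOdd_le_union {A S₀ : Set V} (hdisj : Disjoint A S₀) :
    qOdd G A ≤ qOdd G (A ∪ S₀) +
      {K : Set V | IsCompOf G K A ∧ Odd K.ncard ∧ ∃ v ∈ K, ∃ w ∈ S₀, G.Adj v w}.ncard := by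
  classical
  have hsub : {K : Set V | IsCompOf G K A ∧ Odd K.ncard ∧ ¬∃ v ∈ K, ∃ w ∈ S₀, G.Adj v w} ⊆
      {K : Set V | IsCompOf G K (A ∪ S₀) ∧ Odd K.ncard} := by
    rintro K ⟨hK, hodd, hnadj⟩
    refine ⟨?_, hodd⟩
    obtain ⟨hne, hKA, hreach, hcl⟩ := hK
    refine ⟨hne, fun y hy => Set.mem_union_left _ (hKA hy), ?_, ?_⟩
    · intro v w hv hw
      exact reach_mono Set.subset_union_left (hreach v w hv hw)
    · intro v w hv hw hadj
      rcases hw with hw | hw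
      · exact hcl hv hw hadj
      · exact absurd ⟨v, hv, w, hw, hadj⟩ hnadj
  have hsplit : {K : Set V | IsCompOf G K A ∧ Odd K.ncard} ⊆
      {K : Set V | IsCompOf G K A ∧ Odd K.ncard ∧ ¬∃ v ∈ K, ∃ w ∈ S₀, G.Adj v w} ∪
      {K : Set V | IsCompOf G K A ∧ Odd K.ncard ∧ ∃ v ∈ K, ∃ w ∈ S₀, G.Adj v w} := by
    rintro K ⟨hK, hodd⟩
    by_cases h : ∃ v ∈ K, ∃ w ∈ S₀, G.Adj v w
    · exact Or.inr ⟨hK, hodd, h⟩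
    · exact Or.inl ⟨hK, hodd, h⟩
  calc qOdd G A ≤ ({K : Set V | IsCompOf G K A ∧ Odd K.ncard ∧ ¬∃ v ∈ K, ∃ w ∈ S₀, G.Adj v w} ∪
      {K : Set V | IsCompOf G K A ∧ Odd K.ncard ∧ ∃ v ∈ K, ∃ w ∈ S₀, G.Adj v w}).ncard :=
        Set.ncard_le_ncard hsplit (Set.toFinite _)
    _ ≤ {K : Set V | IsCompOf G K A ∧ Odd K.ncard ∧ ¬∃ v ∈ K, ∃ w ∈ S₀, G.Adj v w}.ncard +
      {K : Set V | IsCompOf G K A ∧ Odd K.ncard ∧ ∃ v ∈ K, ∃ w ∈ S₀, G.Adj v w}.ncard :=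
        Set.ncard_union_le _ _
    _ ≤ qOdd G (A ∪ S₀) +
      {K : Set V | IsCompOf G K A ∧ Odd K.ncard ∧ ∃ v ∈ K, ∃ w ∈ S₀, G.Adj v w}.ncard := by
        gcongr
        exact Set.ncard_le_ncard hsub (Set.toFinite _)
lemma csuppV_compEquiv_symm {A : Set V} {K : Set V} (hK : IsCompOf G K A) :
    csuppV ((compEquiv G A).symm ⟨K, hK⟩) = K :=
  congrArg Subtype.val ((compEquiv G A).apply_symm_apply ⟨K, hK⟩)

lemma ncard_csuppV {A : Set V} (C : (G.induce A).ConnectedComponent) :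
    (csuppV C).ncard = Nat.card C.supp := by
  rw [csuppV, Set.ncard_image_of_injective _ Subtype.val_injective, Nat.card_coe_set_eq]

/-- Odd components (abstract) match odd component vertex sets. -/
noncomputable def oddCompEquiv (G : SimpleGraph V) (A : Set V) :
    {C : (G.induce A).ConnectedComponent // Odd (Nat.card C.supp)} ≃
      {K : Set V // IsCompOf G K A ∧ Odd K.ncard} where
  toFun C := ⟨csuppV C.1, csuppV_isCompOf C.1, by rw [ncard_csuppV]; exact C.2⟩
  invFun K := ⟨(compEquiv G A).symm ⟨K.1, K.2.1⟩, by
    rw [← ncard_csuppV, csuppV_compEquiv_symm]; exact K.2.2⟩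
  left_inv C := by
    apply Subtype.ext
    have : (⟨csuppV C.1, csuppV_isCompOf C.1⟩ : {K : Set V // IsCompOf G K A}) =
        compEquiv G A C.1 := rfl
    show ((compEquiv G A).symm ⟨csuppV C.1, _⟩) = C.1
    rw [show (⟨csuppV C.1, _⟩ : {K : Set V // IsCompOf G K A}) = compEquiv G A C.1 from
      Subtype.ext rfl, Equiv.symm_apply_apply]
  right_inv K := by
    apply Subtype.ext
    exact csuppV_compEquiv_symm K.2.1

lemma qOdd_eq_natCard (G : SimpleGraph V) (A : Set V) :
    qOdd G A = Nat.card {C : (G.induce A).ConnectedComponent // Odd (Nat.card C.supp)} := by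
  rw [qOdd, ← Nat.card_coe_set_eq]
  exact (Nat.card_congr (oddCompEquiv G A)).symm

lemma natCard_comps (G : SimpleGraph V) (A : Set V) :
    Nat.card (G.induce A).ConnectedComponent = {K : Set V | IsCompOf G K A}.ncard := by
  rw [← Nat.card_coe_set_eq]
  exact Nat.card_congr (compEquiv G A)

lemma qOdd_eq_card_comps {A : Set V}
    (hall : ∀ C : (G.induce A).ConnectedComponent, Odd (Nat.card C.supp)) :
    qOdd G A = Nat.card (G.induce A).ConnectedComponent := by
  rw [qOdd_eq_natCard]
  exact Nat.card_congr (Equiv.subtypeUnivEquiv hall)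

lemma natCard_odd_iso {W₁ W₂ : Type} {G₁ : SimpleGraph W₁} {G₂ : SimpleGraph W₂} (e : G₁ ≃g G₂) :
    Nat.card {C : G₁.ConnectedComponent // Odd (Nat.card C.supp)} =
      Nat.card {C : G₂.ConnectedComponent // Odd (Nat.card C.supp)} :=
  Nat.card_congr (e.connectedComponentEquiv.subtypeEquiv fun C =>
    iff_of_eq (congrArg Odd (Nat.card_congr (ConnectedComponent.isoEquivSupp e C))))

lemma natCard_comps_iso {W₁ W₂ : Type} {G₁ : SimpleGraph W₁} {G₂ : SimpleGraph W₂} (e : G₁ ≃g G₂) :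
    Nat.card G₁.ConnectedComponent = Nat.card G₂.ConnectedComponent :=
  Nat.card_congr e.connectedComponentEquiv

lemma pm_map_iso {W₁ W₂ : Type} {G₁ : SimpleGraph W₁} {G₂ : SimpleGraph W₂} (e : G₁ ≃g G₂)
    (h : ∃ M : G₁.Subgraph, M.IsPerfectMatching) : ∃ M : G₂.Subgraph, M.IsPerfectMatching := by
  obtain ⟨M, hM1, hM2⟩ := h
  refine ⟨M.map e.toHom, (Subgraph.Iso.isMatching_map e).2 hM1, ?_⟩
  intro v
  rw [Subgraph.map_verts]
  exact ⟨e.symm v, hM2 _, e.toEquiv.apply_symm_apply v⟩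

lemma pm_iff_iso {W₁ W₂ : Type} {G₁ : SimpleGraph W₁} {G₂ : SimpleGraph W₂} (e : G₁ ≃g G₂) :
    (∃ M : G₁.Subgraph, M.IsPerfectMatching) ↔ ∃ M : G₂.Subgraph, M.IsPerfectMatching :=
  ⟨pm_map_iso e, pm_map_iso e.symm⟩

/-- Composition of two induced subgraphs is an induced subgraph. -/
noncomputable def induceInduceIso (G : SimpleGraph V) (A : Set V) (B : Set ↥A) :
    (G.induce A).induce B ≃g G.induce (Subtype.val '' B) where
  toEquiv := Equiv.Set.image Subtype.val B Subtype.val_injective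
  map_rel_iff' := by
    intro a b
    simp [Equiv.Set.image, Equiv.Set.imageOfInjOn]

lemma val_image_compl {A : Set V} (B : Set ↥A) :
    Subtype.val '' Bᶜ = A \ (Subtype.val '' B) := by
  ext v
  constructor
  · rintro ⟨⟨x, hx⟩, hx2, rfl⟩
    refine ⟨hx, ?_⟩
    rintro ⟨y, hy, hy2⟩
    exact hx2 (by rwa [show (⟨x, hx⟩ : ↥A) = y from Subtype.ext hy2.symm])
  · rintro ⟨hv, hv2⟩
    exact ⟨⟨v, hv⟩, fun h => hv2 ⟨⟨v, hv⟩, h, rfl⟩, rfl⟩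

lemma factorCritical_odd {W : Type} [Fintype W] [Nonempty W] {G' : SimpleGraph W}
    (h : FactorCritical G') : Odd (Nat.card W) := by
  classical
  obtain ⟨M, hM, hverts⟩ := h (Classical.arbitrary W)
  haveI : Fintype M.verts := Fintype.ofFinite _
  have he : Even M.verts.toFinset.card := hM.even_card
  have h4 : M.verts.ncard = M.verts.toFinset.card := Set.ncard_eq_toFinset_card' _
  have h2 : M.verts.ncard + 1 = Nat.card W := by
    rw [hverts, Set.compl_eq_univ_diff]
    rw [Set.ncard_diff_singleton_add_one (Set.mem_univ _) (Set.toFinite _), Set.ncard_univ]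
  rw [Nat.odd_iff]
  rw [Nat.even_iff] at he
  omega
lemma allFC_odd {W : Type} [Fintype W] {G' : SimpleGraph W} {S : Set W}
    (h : AllComponentsFactorCritical G' S) (C : (G'.induce Sᶜ).ConnectedComponent) :
    Odd (Nat.card C.supp) := by
  classical
  obtain ⟨x, hx⟩ := C.exists_rep
  haveI : Nonempty ↥C.supp := ⟨⟨x, hx⟩⟩
  haveI : Fintype ↥C.supp := Fintype.ofFinite _
  exact factorCritical_odd (h C)

/-- The "moreover" part: for any good S, perfect matching iff the count matches. -/
theorem moreoverThm {V : Type} [Fintype V] (G : SimpleGraph V) (S : Set V)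
    (hm : MatchableToComponents G S) (hfc : AllComponentsFactorCritical G S) :
    (∃ M : G.Subgraph, M.IsPerfectMatching) ↔
      S.ncard = Nat.card (G.induce Sᶜ).ConnectedComponent := by
  classical
  obtain ⟨φ, hφinj, hφadj⟩ := hm
  have hodd := allFC_odd hfc
  have hle : S.ncard ≤ Nat.card (G.induce Sᶜ).ConnectedComponent := by
    rw [← Nat.card_coe_set_eq]
    exact Nat.card_le_card_of_injective φ hφinj
  constructor
  · rintro ⟨M, hM⟩
    -- every component is matched to a distinct vertex of S
    have hKodd : ∀ K : {K : Set V // IsCompOf G K Sᶜ}, Odd K.1.ncard := by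
      rintro ⟨K, hK⟩
      obtain ⟨v, hv⟩ := hK.1
      have h1 : K = csuppV ((G.induce Sᶜ).connectedComponentMk ⟨v, hK.subset hv⟩) :=
        hK.eq_csuppV hv
      show Odd K.ncard
      rw [h1, ncard_csuppV]
      exact hodd _
    have hmatch : ∀ K : {K : Set V // IsCompOf G K Sᶜ},
        ∃ w ∈ S, ∃ v ∈ K.1, M.Adj v w := by
      rintro ⟨K, hK⟩
      by_contra hcon
      push_neg at hcon
      have hMK : (M.induce K).IsMatching := by
        intro v hv
        rw [Subgraph.induce_verts] at hv
        obtain ⟨w, hw1, hw2⟩ := hM.1 (hM.2 v)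
        have hwK : w ∈ K := by
          by_cases hwS : w ∈ S
          · exact absurd hw1 (hcon w hwS v hv)
          · exact hK.2.choose_spec.2 hv hwS (M.adj_sub hw1)
        refine ⟨w, ⟨hv, hwK, hw1⟩, ?_⟩
        rintro y ⟨-, -, hy⟩
        exact hw2 y hy
      haveI : Fintype (M.induce K).verts := Fintype.ofFinite _
      have he : Even (M.induce K).verts.toFinset.card := hMK.even_card
      have h5 : Even ((M.induce K).verts.ncard) := by
        rw [Set.ncard_eq_toFinset_card']
        exact he
      have h3 : (M.induce K).verts = K := rfl
      have h4 : Odd K.ncard := hKodd ⟨K, hK⟩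
      rw [h3] at h5
      exact (Nat.not_even_iff_odd.2 h4) h5
    choose w hwS v hvK hadj using hmatch
    have hψ : Function.Injective fun K => (⟨w K, hwS K⟩ : ↥S) := by
      intro K₁ K₂ hw
      have hww : w K₁ = w K₂ := congrArg Subtype.val hw
      obtain ⟨u, hu1, hu2⟩ := hM.1 (hM.2 (w K₁))
      have e1 : v K₁ = u := hu2 _ (hadj K₁).symm
      have e2 : v K₂ = u := hu2 _ (hww ▸ (hadj K₂).symm)
      exact Subtype.ext (K₁.2.eq_of_mem K₂.2 (hvK K₁) (e1.trans e2.symm ▸ hvK K₂))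
    have hge : Nat.card (G.induce Sᶜ).ConnectedComponent ≤ S.ncard := by
      rw [natCard_comps, ← Nat.card_coe_set_eq, ← Nat.card_coe_set_eq]
      exact Nat.card_le_card_of_injective _ hψ
    exact le_antisymm hle hge
  · intro hcard
    -- φ is surjective
    have hbij : Function.Bijective φ := by
      refine (Nat.bijective_iff_injective_and_card φ).2 ⟨hφinj, ?_⟩
      rw [Nat.card_coe_set_eq, hcard]
    -- chosen neighbours
    choose ws hws1 hws2 using hφadj
    -- the matchings inside components
    have hcompM : ∀ s : ↥S, ∃ N : G.Subgraph, N.IsMatching ∧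
        N.verts = csuppV (φ s) \ {(ws s).val} := by
      intro s
      set C := φ s with hC
      obtain ⟨Mc, hMc, hMcv⟩ := hfc C ⟨ws s, hws1 s⟩
      have hinj : Function.Injective
          (fun x : ↥{v | (G.induce Sᶜ).connectedComponentMk v = C} => (x.val.val : V)) :=
        fun a b h => Subtype.ext (Subtype.ext h)
      let f : ((G.induce Sᶜ).induce {v | (G.induce Sᶜ).connectedComponentMk v = C}) →g G :=
        ⟨fun x => x.val.val, fun {a b} h => h⟩
      refine ⟨Mc.map f, hMc.map f hinj, ?_⟩
      rw [Subgraph.map_verts, hMcv]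
      ext y
      constructor
      · rintro ⟨x, hx, rfl⟩
        simp only [Set.mem_compl_iff, Set.mem_singleton_iff] at hx
        refine ⟨mem_csuppV.2 ⟨x.val.2, x.2⟩, ?_⟩
        simp only [Set.mem_singleton_iff]
        intro hxy
        exact hx (Subtype.ext (Subtype.ext hxy))
      · rintro ⟨hy, hy2⟩
        obtain ⟨hySc, hymk⟩ := mem_csuppV.1 hy
        refine ⟨⟨⟨y, hySc⟩, hymk⟩, ?_, rfl⟩
        simp only [Set.mem_compl_iff, Set.mem_singleton_iff]
        intro hxy
        exact hy2 (congrArg (fun z => (Subtype.val (Subtype.val z) : V)) hxy)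
    choose N hNmatch hNverts using hcompM
    -- the pieces
    have hws2' : ∀ s : ↥S, G.Adj s.val (ws s).val := hws2
    have hwmem : ∀ s : ↥S, (ws s).val ∈ csuppV (φ s) :=
      fun s => mem_csuppV.2 ⟨(ws s).2, hws1 s⟩
    set P : ↥S → G.Subgraph := fun s => G.subgraphOfAdj (hws2' s) ⊔ N s with hP
    have hPmatch : ∀ s, (P s).IsMatching := by
      intro s
      refine (Subgraph.IsMatching.subgraphOfAdj (hws2' s)).sup (hNmatch s) ?_
      rw [(Subgraph.IsMatching.subgraphOfAdj (hws2' s)).support_eq_verts,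
        (hNmatch s).support_eq_verts, subgraphOfAdj_verts, hNverts]
      rw [Set.disjoint_left]
      rintro a (rfl | rfl)
      · rintro ⟨ha, -⟩
        exact ((csuppV_isCompOf (φ s)).subset ha) s.2
      · rintro ⟨-, ha⟩
        exact ha rfl
    have hPverts : ∀ s, (P s).verts = {s.val} ∪ csuppV (φ s) := by
      intro s
      rw [hP]
      simp only [Subgraph.verts_sup, subgraphOfAdj_verts, hNverts]
      ext y
      simp only [Set.mem_union, Set.mem_insert_iff, Set.mem_singleton_iff, Set.mem_diff]
      constructor
      · rintro ((rfl | rfl) | ⟨h1, -⟩)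
        · exact Or.inl rfl
        · exact Or.inr (hwmem s)
        · exact Or.inr h1
      · rintro (rfl | h)
        · exact Or.inl (Or.inl rfl)
        · by_cases hy : y = (ws s).val
          · exact Or.inl (Or.inr hy)
          · exact Or.inr ⟨h, hy⟩
    have hcsuppinj : ∀ s t : ↥S, φ s ≠ φ t → Disjoint (csuppV (φ s)) (csuppV (φ t)) := by
      intro s t hst
      rw [Set.disjoint_left]
      intro a ha ha'
      exact hst (by
        obtain ⟨h1, h2⟩ := mem_csuppV.1 ha
        obtain ⟨h1', h2'⟩ := mem_csuppV.1 ha'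
        rw [← h2, ← h2'])
    refine ⟨⨆ s, P s, Subgraph.IsMatching.iSup hPmatch ?_, ?_⟩
    · intro s t hst
      rw [(hPmatch s).support_eq_verts, (hPmatch t).support_eq_verts, hPverts, hPverts]
      have hφst : φ s ≠ φ t := fun h => hst (hφinj h)
      rw [Set.disjoint_left]
      rintro a (rfl | ha)
      · rintro (h | h)
        · exact hst (Subtype.ext h)
        · exact ((csuppV_isCompOf (φ t)).subset h) s.2
      · rintro (rfl | h)
        · exact ((csuppV_isCompOf (φ s)).subset ha) t.2
        · exact (Set.disjoint_left.1 (hcsuppinj s t hφst)) ha h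
    · intro y
      rw [Subgraph.verts_iSup]
      by_cases hy : y ∈ S
      · exact Set.mem_iUnion.2 ⟨⟨y, hy⟩, by rw [hPverts]; exact Or.inl rfl⟩
      · obtain ⟨s, hs⟩ := hbij.2 ((G.induce Sᶜ).connectedComponentMk ⟨y, hy⟩)
        refine Set.mem_iUnion.2 ⟨s, ?_⟩
        rw [hPverts]
        exact Or.inr (mem_csuppV.2 ⟨hy, hs.symm⟩)
set_option maxHeartbeats 1000000 in
theorem existsGE : ∀ (n : ℕ) (V : Type) [Fintype V] (G : SimpleGraph V),
    Fintype.card V = n →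
    ∃ S : Set V, MatchableToComponents G S ∧ AllComponentsFactorCritical G S := by
  intro n
  induction n using Nat.strong_induction_on with
  | _ n ih =>
  intro V instV G hcard
  classical
  haveI : Fintype (Set V) := Fintype.ofFinite _
  obtain ⟨S, -, hSmax⟩ := Finset.exists_max_image (Finset.univ : Finset (Set V))
    (fun T => ((n : ℤ) + 1) * ((qOdd G Tᶜ : ℤ) - T.ncard) + T.ncard) ⟨∅, Finset.mem_univ ∅⟩
  have hSmax' : ∀ T : Set V,
      ((n : ℤ) + 1) * ((qOdd G Tᶜ : ℤ) - T.ncard) + T.ncard ≤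
      ((n : ℤ) + 1) * ((qOdd G Sᶜ : ℤ) - S.ncard) + S.ncard :=
    fun T => hSmax T (Finset.mem_univ _)
  have hncard_le : ∀ T : Set V, (T.ncard : ℤ) ≤ n := by
    intro T
    have h := Set.ncard_le_ncard (Set.subset_univ T) (Set.toFinite _)
    rw [Set.ncard_univ, Nat.card_eq_fintype_card, hcard] at h
    exact_mod_cast h
  have hncard_nonneg : ∀ T : Set V, (0 : ℤ) ≤ T.ncard := fun T => by positivity
  have hdmax : ∀ T : Set V, (qOdd G Tᶜ : ℤ) - T.ncard ≤ (qOdd G Sᶜ : ℤ) - S.ncard := by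
    intro T
    by_contra h1
    push_neg at h1
    have h4 : (qOdd G Sᶜ : ℤ) - S.ncard + 1 ≤ (qOdd G Tᶜ : ℤ) - T.ncard := by omega
    have h5 := hSmax' T
    have h6 := hncard_le S
    have h7 := hncard_nonneg T
    nlinarith [h4, h5, h6, h7]
  have hkey : ∀ T : Set V, ¬(((qOdd G Sᶜ : ℤ) - S.ncard ≤ (qOdd G Tᶜ : ℤ) - T.ncard) ∧
      S.ncard < T.ncard) := by
    rintro T ⟨h1, h2⟩
    have h5 := hSmax' T
    have h2' : (S.ncard : ℤ) + 1 ≤ T.ncard := by exact_mod_cast h2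
    nlinarith [h1, h5, h2']
  -- Step 1: every component of G - S is odd
  have hoddK : ∀ K : Set V, IsCompOf G K Sᶜ → Odd K.ncard := by
    intro K hK
    by_contra hodd
    obtain ⟨v, hv⟩ := hK.1
    have hvS : v ∈ Sᶜ := hK.subset hv
    have hq := qOdd_diff (G := G) hK (Set.singleton_subset_iff.2 hv)
    rw [if_neg hodd, add_zero] at hq
    have hKc : (K \ {v}).ncard + 1 = K.ncard :=
      Set.ncard_diff_singleton_add_one hv (Set.toFinite _)
    have hKv_odd : Odd (K \ {v}).ncard := by
      rw [Nat.odd_iff]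
      have h2 : K.ncard % 2 = 0 := by
        rcases Nat.even_or_odd K.ncard with he | ho
        · exact Nat.even_iff.1 he
        · exact absurd ho hodd
      omega
    have h1 : 1 ≤ qOdd G (K \ {v}) := one_le_qOdd hKv_odd
    have hSc' : (insert v S)ᶜ = Sᶜ \ {v} := by
      ext x
      simp only [Set.mem_compl_iff, Set.mem_insert_iff, Set.mem_diff, Set.mem_singleton_iff]
      tauto
    have hcS' : (insert v S).ncard = S.ncard + 1 :=
      Set.ncard_insert_of_notMem (fun h => hvS h) (Set.toFinite _)
    apply hkey (insert v S)
    constructor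
    · rw [hSc', hcS']
      push_cast
      omega
    · omega
  -- Step 2: every component minus a vertex has a perfect matching
  have hpm : ∀ K : Set V, IsCompOf G K Sᶜ → ∀ v, v ∈ K →
      ∃ M : (G.induce (K \ {v})).Subgraph, M.IsPerfectMatching := by
    intro K hK v hv
    by_contra hnpm
    haveI hfin : Fintype ↥(K \ {v}) := (Set.toFinite (K \ {v})).fintype
    have hcard1 : Fintype.card ↥(K \ {v}) = (K \ {v}).ncard := by
      rw [← Set.toFinset_card, ← Set.ncard_eq_toFinset_card']
    have hKn : K.ncard ≤ n := by
      have h := Set.ncard_le_ncard (Set.subset_univ K) (Set.toFinite _)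
      rwa [Set.ncard_univ, Nat.card_eq_fintype_card, hcard] at h
    have hKc1 : (K \ {v}).ncard + 1 = K.ncard :=
      Set.ncard_diff_singleton_add_one hv (Set.toFinite _)
    have hmn : Fintype.card ↥(K \ {v}) < n := by
      rw [hcard1]
      omega
    obtain ⟨T', hmat, hfcH⟩ := ih _ hmn ↥(K \ {v}) (G.induce (K \ {v})) rfl
    have hiff := moreoverThm (G.induce (K \ {v})) T' hmat hfcH
    have hneq : T'.ncard ≠ Nat.card ((G.induce (K \ {v})).induce T'ᶜ).ConnectedComponent :=
      fun h => hnpm (hiff.2 h)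
    obtain ⟨ψ, hψinj, -⟩ := hmat
    have hleT : T'.ncard ≤ Nat.card ((G.induce (K \ {v})).induce T'ᶜ).ConnectedComponent := by
      rw [← Nat.card_coe_set_eq]
      exact Nat.card_le_card_of_injective ψ hψinj
    set D : Set V := insert v (Subtype.val '' T') with hD
    have hDK : D ⊆ K := by
      rw [hD]
      rintro x (rfl | ⟨y, hy, rfl⟩)
      · exact hv
      · exact y.2.1
    have hKD : K \ D = Subtype.val '' (T'ᶜ) := by
      rw [val_image_compl, hD]
      ext x
      simp only [Set.mem_diff, Set.mem_insert_iff, Set.mem_singleton_iff]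
      tauto
    have hqKD : qOdd G (K \ D) =
        Nat.card ((G.induce (K \ {v})).induce T'ᶜ).ConnectedComponent := by
      rw [hKD, qOdd_eq_natCard, natCard_odd_iso (induceInduceIso G (K \ {v}) T'ᶜ).symm]
      exact Nat.card_congr (Equiv.subtypeUnivEquiv (allFC_odd hfcH))
    have hpar := qOdd_modEq G (K \ D)
    have hvT' : v ∉ Subtype.val '' T' := by
      rintro ⟨y, hy, hy2⟩
      exact y.2.2 (by simp [hy2])
    have hDcard : D.ncard = T'.ncard + 1 := by
      rw [hD, Set.ncard_insert_of_notMem hvT' (Set.toFinite _),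
        Set.ncard_image_of_injective _ Subtype.val_injective]
    have hKDcard : (K \ D).ncard + (T'.ncard + 1) = K.ncard := by
      have h2 : (K \ D).ncard = K.ncard - D.ncard := Set.ncard_diff hDK (Set.toFinite _)
      have h3 : D.ncard ≤ K.ncard := Set.ncard_le_ncard hDK (Set.toFinite _)
      omega
    have hKodd : Odd K.ncard := hoddK K hK
    have hgt : T'.ncard + 2 ≤ qOdd G (K \ D) := by
      rw [hqKD] at hpar ⊢
      rw [Nat.ModEq] at hpar
      rw [Nat.odd_iff] at hKodd
      omega
    have hq2 := qOdd_diff (G := G) hK hDK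
    rw [if_pos hKodd] at hq2
    have hdisj : Disjoint S D := by
      rw [Set.disjoint_left]
      intro a ha ha'
      exact (hK.subset (hDK ha')) ha
    have hSc2 : (S ∪ D)ᶜ = Sᶜ \ D := by
      rw [Set.compl_union, Set.diff_eq]
    have hcS2 : (S ∪ D).ncard = S.ncard + (T'.ncard + 1) := by
      rw [Set.ncard_union_eq hdisj (Set.toFinite _) (Set.toFinite _), hDcard]
    apply hkey (S ∪ D)
    constructor
    · rw [hSc2, hcS2]
      push_cast
      omega
    · rw [hcS2]
      omega
  -- Step 3: Hall's condition and matchability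
  have hHall : ∀ s' : Finset ↥S, s'.card ≤ (s'.biUnion (fun s =>
      (Set.toFinite {K : Set V | IsCompOf G K Sᶜ ∧ ∃ w ∈ K, G.Adj s.val w}).toFinset)).card := by
    intro s'
    by_contra hcon
    push_neg at hcon
    set N := s'.biUnion (fun s =>
      (Set.toFinite {K : Set V | IsCompOf G K Sᶜ ∧ ∃ w ∈ K, G.Adj s.val w}).toFinset) with hN
    set S₀ : Set V := Subtype.val '' (↑s' : Set ↥S) with hS₀
    have hS₀S : S₀ ⊆ S := by
      rintro x ⟨y, -, rfl⟩
      exact y.2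
    have hS₀card : S₀.ncard = s'.card := by
      rw [hS₀, Set.ncard_image_of_injective _ Subtype.val_injective, Set.ncard_coe_finset]
    have hdisj0 : Disjoint Sᶜ S₀ := by
      rw [Set.disjoint_left]
      intro a ha ha'
      exact ha (hS₀S ha')
    have hle := qOdd_le_union (G := G) hdisj0
    have hsub : {K : Set V | IsCompOf G K Sᶜ ∧ Odd K.ncard ∧ ∃ v ∈ K, ∃ w ∈ S₀, G.Adj v w} ⊆
        ↑N := by
      rintro K ⟨h1, h2, u, huK, w, hw, hadj⟩
      obtain ⟨t, ht, rfl⟩ := hw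
      rw [hN]
      simp only [Finset.coe_biUnion, Set.mem_iUnion, Finset.mem_coe,
        Set.Finite.mem_toFinset, Set.mem_setOf_eq]
      exact ⟨t, ht, h1, u, huK, hadj.symm⟩
    have h3 : {K : Set V | IsCompOf G K Sᶜ ∧ Odd K.ncard ∧ ∃ v ∈ K, ∃ w ∈ S₀, G.Adj v w}.ncard ≤
        N.card := by
      rw [← Set.ncard_coe_finset]
      exact Set.ncard_le_ncard hsub (Set.toFinite _)
    have hSc3 : (S \ S₀)ᶜ = Sᶜ ∪ S₀ := by
      rw [Set.diff_eq, Set.compl_inter, compl_compl]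
    have hcS3 : (S \ S₀).ncard + s'.card = S.ncard := by
      rw [← hS₀card]
      have h2 : (S \ S₀).ncard = S.ncard - S₀.ncard := Set.ncard_diff hS₀S (Set.toFinite _)
      have h4 : S₀.ncard ≤ S.ncard := Set.ncard_le_ncard hS₀S (Set.toFinite _)
      omega
    have hd3 := hdmax (S \ S₀)
    rw [hSc3] at hd3
    push_cast at hd3
    omega
  obtain ⟨g, hginj, hgmem⟩ :=
    (Finset.all_card_le_biUnion_card_iff_existsInjective' _).1 hHall
  have hgmem' : ∀ s : ↥S, IsCompOf G (g s) Sᶜ ∧ ∃ w ∈ g s, G.Adj s.val w := by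
    intro s
    have := hgmem s
    rwa [Set.Finite.mem_toFinset] at this
  refine ⟨S, ⟨fun s => (compEquiv G Sᶜ).symm ⟨g s, (hgmem' s).1⟩, ?_, ?_⟩, ?_⟩
  · intro a b h
    apply hginj
    have h2 := (compEquiv G Sᶜ).symm.injective h
    exact congrArg Subtype.val h2
  · intro s
    obtain ⟨h1, w, hwK, hadj⟩ := hgmem' s
    refine ⟨⟨w, h1.subset hwK⟩, ?_, hadj⟩
    exact (compEquiv_symm_mk h1 hwK).symm
  · -- AllComponentsFactorCritical
    intro C
    have hK := csuppV_isCompOf C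
    intro x
    have hvK : x.val.val ∈ csuppV C := ⟨x.val, x.2, rfl⟩
    obtain ⟨MH, hMH⟩ := hpm (csuppV C) hK x.val.val hvK
    have hmk : ∀ y : ↥(csuppV C \ {x.val.val}),
        (G.induce Sᶜ).connectedComponentMk ⟨y.val, hK.subset y.2.1⟩ = C := by
      intro y
      obtain ⟨h, hmk⟩ := mem_csuppV.1 y.2.1
      exact hmk
    let f : (G.induce (csuppV C \ {x.val.val})) →g
        ((G.induce Sᶜ).induce {v | (G.induce Sᶜ).connectedComponentMk v = C}) :=
      ⟨fun y => ⟨⟨y.val, hK.subset y.2.1⟩, hmk y⟩, fun {a b} h => h⟩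
    have hfinj : Function.Injective f :=
      fun a b h => Subtype.ext (congrArg (fun z => (z : ↥{v | (G.induce Sᶜ).connectedComponentMk v = C}).val.val) h)
    refine ⟨MH.map f, Subgraph.IsMatching.map f hfinj hMH.1, ?_⟩
    rw [Subgraph.map_verts, hMH.2.verts_eq_univ]
    ext y
    simp only [Set.image_univ, Set.mem_range, Set.mem_compl_iff, Set.mem_singleton_iff]
    constructor
    · rintro ⟨z, rfl⟩
      intro h
      exact z.2.2 (by
        have : z.val = x.val.val := congrArg (fun w => (w : ↥{v | (G.induce Sᶜ).connectedComponentMk v = C}).val.val) h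
        simp [this])
    · intro hy
      have hymem : y.val.val ∈ csuppV C := ⟨y.val, y.2, rfl⟩
      have hyne : y.val.val ≠ x.val.val := by
        intro h
        exact hy (Subtype.ext (Subtype.ext h))
      exact ⟨⟨y.val.val, hymem, hyne⟩, Subtype.ext (Subtype.ext rfl)⟩
end GEAux

/-- Gallai–Edmonds type strengthening of Tutte's theorem: every graph contains a set `S`
matchable to the components of `G - S` with all components of `G - S` factor-critical;
moreover for any such `S`, `G` has a perfect matching iff `|S|` equals the number of
components of `G - S`. -/
theorem gallai_edmonds_matchable {V : Type} [Fintype V] (G : SimpleGraph V) :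
    (∃ S : Set V, MatchableToComponents G S ∧ AllComponentsFactorCritical G S) ∧
    (∀ S : Set V, MatchableToComponents G S → AllComponentsFactorCritical G S →
      ((∃ M : G.Subgraph, M.IsPerfectMatching) ↔
        S.ncard = Nat.card (G.induce Sᶜ).ConnectedComponent)) := by
  constructor
  · exact GEAux.existsGE (Fintype.card V) V G rfl
  · intro S hm hfc
    exact GEAux.moreoverThm G S hm hfc
end

section
/- Every non-trivial (i.e., having more than one vertex) factor-critical subgraph of a fullerene graph is 2-connected. -/
open SimpleGraph

/-- The set of edges of `G` with exactly one endpoint in `X` (the edge cut `∇(X)`). -/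
def edgeCut {V : Type} (G : SimpleGraph V) (X : Set V) : Set (Sym2 V) :=
  {e | ∃ a b, G.Adj a b ∧ e = s(a,b) ∧ a ∈ X ∧ b ∉ X}

/-- The set of edges of `G` with one endpoint in `X` and the other in `Y`. -/
def edgesBetween {V : Type} (G : SimpleGraph V) (X Y : Set V) : Set (Sym2 V) :=
  {e | ∃ a b, G.Adj a b ∧ e = s(a,b) ∧ a ∈ X ∧ b ∈ Y}

/-- The set of edges of `G` with both endpoints in `X`. -/
def interiorEdges {V : Type} (G : SimpleGraph V) (X : Set V) : Set (Sym2 V) :=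
  {e | e ∈ G.edgeSet ∧ ∀ v ∈ e, v ∈ X}

/-- `C` is a cyclic edge-cut of `G`: after deleting `C` there are cycles in two
different components. -/
def IsCyclicEdgeCut {V : Type} (G : SimpleGraph V) (C : Set (Sym2 V)) : Prop :=
  C ⊆ G.edgeSet ∧ ∃ (u v : V) (p : (G.deleteEdges C).Walk u u) (q : (G.deleteEdges C).Walk v v),
    p.IsCycle ∧ q.IsCycle ∧ ¬ (G.deleteEdges C).Reachable u v

/-- `G` is cyclically `k`-edge-connected: every cyclic edge-cut has at least `k` edges. -/
def CyclicallyEdgeConnected {V : Type} (G : SimpleGraph V) (k : ℕ) : Prop :=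
  ∀ C : Set (Sym2 V), IsCyclicEdgeCut G C → k ≤ C.ncard

/-- A graph is 2-connected if it has at least 3 vertices and deleting any vertex
leaves it connected. -/
def TwoConnected {W : Type} (G : SimpleGraph W) : Prop :=
  3 ≤ Nat.card W ∧ ∀ v : W, ((⊤ : G.Subgraph).deleteVerts {v}).coe.Connected

/-- A combinatorial plane structure on a graph: an abstract set of faces, each face
being a cycle of the graph, with every edge lying on exactly two faces. -/
structure PlaneFaceStruct (V : Type) (G : SimpleGraph V) where
  Face : Type
  faceFinite : Finite Face
  boundary : Face → Set (Sym2 V)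
  boundary_sub : ∀ f, boundary f ⊆ G.edgeSet
  boundary_cycle : ∀ f : Face, ∃ (v : V) (w : G.Walk v v), w.IsCycle ∧
    ∀ e, e ∈ boundary f ↔ e ∈ w.edges
  edge_faces : ∀ e ∈ G.edgeSet, {f : Face | e ∈ boundary f}.ncard = 2

/-- A fullerene graph: a 3-connected cubic plane graph whose faces are pentagons and
hexagons, with exactly 12 pentagonal faces. -/
structure Fullerene (V : Type) [Fintype V] where
  G : SimpleGraph V
  threeConnected : ∀ S : Set V, S.ncard ≤ 2 → ((⊤ : G.Subgraph).deleteVerts S).coe.Connected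
  cubic : ∀ v : V, Nat.card {w // G.Adj v w} = 3
  faces : PlaneFaceStruct V G
  face_size : ∀ f, (faces.boundary f).ncard = 5 ∨ (faces.boundary f).ncard = 6
  pentagons : {f : faces.Face | (faces.boundary f).ncard = 5}.ncard = 12

/-- The vertices on the boundary of a face. -/
def Fullerene.faceVerts {V : Type} [Fintype V] (Fu : Fullerene V) (f : Fu.faces.Face) : Set V :=
  {v | ∃ e ∈ Fu.faces.boundary f, v ∈ e}

/-- `g` is a neighboring face of `f`: it is distinct from `f` and shares an edge with it. -/
def Fullerene.NeighboringFace {V : Type} [Fintype V] (Fu : Fullerene V)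
    (g f : Fu.faces.Face) : Prop :=
  g ≠ f ∧ (Fu.faces.boundary g ∩ Fu.faces.boundary f).Nonempty

section Aux

variable {W : Type}

private lemma even_card_invol [DecidableEq W] (f : W → W) (s : Finset W)
    (h1 : ∀ a ∈ s, f a ∈ s) (h2 : ∀ a ∈ s, f (f a) = a) (h3 : ∀ a ∈ s, f a ≠ a) :
    Even s.card := by
  induction s using Finset.strongInduction with
  | _ s ih =>
    rcases s.eq_empty_or_nonempty with rfl | ⟨a, ha⟩
    · simp
    · have hfa : f a ∈ s := h1 a ha
      have hne : f a ≠ a := h3 a ha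
      set t := (s.erase a).erase (f a) with ht
      have hts : t ⊂ s := by
        refine Finset.ssubset_of_subset_of_ssubset ?_ (Finset.erase_ssubset ha)
        exact Finset.erase_subset _ _
      have hmt : ∀ b ∈ t, b ∈ s ∧ b ≠ a ∧ b ≠ f a := by
        intro b hb
        simp only [ht, Finset.mem_erase] at hb
        exact ⟨hb.2.2, hb.2.1, hb.1⟩
      have hmem : ∀ b, b ∈ s → b ≠ a → b ≠ f a → b ∈ t := by
        intro b hb h1 h2
        simp only [ht, Finset.mem_erase]
        exact ⟨h2, h1, hb⟩
      have key := ih t hts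
        (by
          intro b hb
          obtain ⟨hbs, hba, hbfa⟩ := hmt b hb
          refine hmem _ (h1 b hbs) ?_ ?_
          · intro h
            have := congrArg f h
            rw [h2 b hbs] at this
            exact hbfa this
          · intro h
            have := congrArg f h
            rw [h2 b hbs, h2 a ha] at this
            exact hba this
          )
        (fun b hb => h2 b (hmt b hb).1)
        (fun b hb => h3 b (hmt b hb).1)
      have hcard : s.card = t.card + 2 := by
        have h1' : (s.erase a).card = s.card - 1 := Finset.card_erase_of_mem ha
        have h2' : t.card = (s.erase a).card - 1 :=
          Finset.card_erase_of_mem (Finset.mem_erase.mpr ⟨hne, hfa⟩)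
        have : 1 ≤ s.card := Finset.card_pos.mpr ⟨a, ha⟩
        have : 2 ≤ s.card := by
          have : ({f a, a} : Finset W) ⊆ s := by
            intro x hx; simp only [Finset.mem_insert, Finset.mem_singleton] at hx
            rcases hx with rfl | rfl <;> assumption
          calc 2 = ({f a, a} : Finset W).card := by
                  rw [Finset.card_insert_of_notMem (by simpa using hne)]; simp
            _ ≤ s.card := Finset.card_le_card this
        omega
      obtain ⟨k, hk⟩ := key
      exact ⟨k + 1, by omega⟩

private lemma even_ncard_invol [Finite W] (S : Set W) (f : W → W)
    (h1 : ∀ a ∈ S, f a ∈ S) (h2 : ∀ a ∈ S, f (f a) = a) (h3 : ∀ a ∈ S, f a ≠ a) :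
    Even S.ncard := by
  classical
  cases nonempty_fintype W
  rw [Set.ncard_eq_toFinset_card' S]
  exact even_card_invol f S.toFinset (by simpa using h1) (by simpa using h2) (by simpa using h3)

variable {G : SimpleGraph W}

noncomputable def matchPartner (M : G.Subgraph) (hM : M.IsMatching) (w : W) : W :=
  letI := Classical.dec (w ∈ M.verts)
  if h : w ∈ M.verts then (hM h).exists.choose else w

lemma matchPartner_adj {M : G.Subgraph} (hM : M.IsMatching) {w : W} (hw : w ∈ M.verts) :
    M.Adj w (matchPartner M hM w) := by
  unfold matchPartner
  rw [dif_pos hw]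
  exact (hM hw).exists.choose_spec

lemma matchPartner_mem {M : G.Subgraph} (hM : M.IsMatching) {w : W} (hw : w ∈ M.verts) :
    matchPartner M hM w ∈ M.verts :=
  M.edge_vert (matchPartner_adj hM hw).symm

lemma matchPartner_ne {M : G.Subgraph} (hM : M.IsMatching) {w : W} (hw : w ∈ M.verts) :
    matchPartner M hM w ≠ w := by
  intro h
  have := matchPartner_adj hM hw
  rw [h] at this
  exact G.loopless.irrefl w (M.adj_sub this)

lemma matchPartner_invol {M : G.Subgraph} (hM : M.IsMatching) {w : W} (hw : w ∈ M.verts) :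
    matchPartner M hM (matchPartner M hM w) = w := by
  have h1 := matchPartner_adj hM (matchPartner_mem hM hw)
  have h2 := (matchPartner_adj hM hw).symm
  exact (hM (matchPartner_mem hM hw)).unique h1 h2

/-- In a factor-critical graph, every nonempty set `C` avoiding `v` and closed under
adjacency away from `v` contains two distinct neighbours of `v`. -/
lemma two_neighbors [Finite W] (hfc : FactorCritical G) (v : W)
    (C : Set W) (hvC : v ∉ C) (hcl : ∀ w ∈ C, ∀ z, G.Adj w z → z ≠ v → z ∈ C)
    (hne : C.Nonempty) :
    ∃ w₁ ∈ C, ∃ w₂ ∈ C, w₁ ≠ w₂ ∧ G.Adj v w₁ ∧ G.Adj v w₂ := by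
  obtain ⟨M, hM, hMv⟩ := hfc v
  have hmemM : ∀ w ∈ C, w ∈ M.verts := by
    intro w hw; rw [hMv]; exact fun h => hvC (h ▸ hw)
  have hEven : Even C.ncard := by
    refine even_ncard_invol C (matchPartner M hM) ?_ ?_ ?_
    · intro a ha
      have haM := hmemM a ha
      have hpM := matchPartner_mem hM haM
      have hpv : matchPartner M hM a ≠ v := by rw [hMv] at hpM; exact hpM
      exact hcl a ha _ (M.adj_sub (matchPartner_adj hM haM)) hpv
    · intro a ha; exact matchPartner_invol hM (hmemM a ha)
    · intro a ha; exact matchPartner_ne hM (hmemM a ha)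
  have key : ∀ u ∈ C, ∃ w ∈ C, w ≠ u ∧ G.Adj v w := by
    intro u hu
    obtain ⟨M', hM', hM'v⟩ := hfc u
    by_contra hcon
    push_neg at hcon
    have hmemM' : ∀ w, w ≠ u → w ∈ M'.verts := by
      intro w hw; rw [hM'v]; exact hw
    have hEven' : Even (C \ {u}).ncard := by
      refine even_ncard_invol _ (matchPartner M' hM') ?_ ?_ ?_
      · rintro a ⟨haC, hau⟩
        simp only [Set.mem_singleton_iff] at hau
        have haM := hmemM' a hau
        have hpM := matchPartner_mem hM' haM
        have hpu : matchPartner M' hM' a ≠ u := by rw [hM'v] at hpM; exact hpM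
        have hpv : matchPartner M' hM' a ≠ v := by
          intro h
          have had := matchPartner_adj hM' haM
          rw [h] at had
          have : G.Adj a v := M'.adj_sub had
          exact hcon a haC hau this.symm
        exact ⟨hcl a haC _ (M'.adj_sub (matchPartner_adj hM' haM)) hpv, hpu⟩
      · rintro a ⟨haC, hau⟩
        simp only [Set.mem_singleton_iff] at hau
        exact matchPartner_invol hM' (hmemM' a hau)
      · rintro a ⟨haC, hau⟩
        simp only [Set.mem_singleton_iff] at hau
        exact matchPartner_ne hM' (hmemM' a hau)
    have h1 : (C \ {u}).ncard = C.ncard - 1 :=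
      Set.ncard_diff_singleton_of_mem hu
    have h2 : 1 ≤ C.ncard := (Set.ncard_pos (Set.toFinite C)).mpr ⟨u, hu⟩
    obtain ⟨k, hk⟩ := hEven
    obtain ⟨k', hk'⟩ := hEven'
    omega
  obtain ⟨u0, hu0⟩ := hne
  obtain ⟨w1, hw1C, _, hadj1⟩ := key u0 hu0
  obtain ⟨w2, hw2C, hne2, hadj2⟩ := key w1 hw1C
  exact ⟨w2, hw2C, w1, hw1C, hne2, hadj2, hadj1⟩

end Aux


section Main

variable {W : Type}

lemma fc_twoConnected [Finite W] {G : SimpleGraph W} (hnt : Nontrivial W)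
    (hfc : FactorCritical G) (hdeg : ∀ v : W, Nat.card {w // G.Adj v w} ≤ 3) :
    TwoConnected G := by
  classical
  cases nonempty_fintype W
  constructor
  · -- at least 3 vertices
    obtain ⟨v, w, hvw⟩ := hnt
    obtain ⟨M, hM, hMv⟩ := hfc v
    have hw : w ∈ M.verts := by rw [hMv]; exact fun h => hvw (h.symm)
    set y := matchPartner M hM w with hy
    have hyw : y ≠ w := matchPartner_ne hM hw
    have hyv : y ≠ v := by
      have := matchPartner_mem hM hw
      rw [hMv] at this; exact this
    rw [Nat.card_eq_fintype_card]
    have : 2 < Fintype.card W := Fintype.two_lt_card_iff.mpr ⟨v, w, y, hvw, Ne.symm hyv, Ne.symm hyw⟩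
    omega
  · intro v
    by_contra hcon
    have hnev : ∃ w : W, w ≠ v := by
      obtain ⟨a, b, hab⟩ := hnt
      rcases eq_or_ne a v with rfl | h
      · exact ⟨b, fun h => hab h.symm⟩
      · exact ⟨a, h⟩
    obtain ⟨w0, hw0⟩ := hnev
    have hne : Nonempty ((⊤ : G.Subgraph).deleteVerts {v}).verts :=
      ⟨⟨w0, ⟨trivial, hw0⟩⟩⟩
    rw [SimpleGraph.connected_iff] at hcon
    push_neg at hcon
    have hpre : ¬ ((⊤ : G.Subgraph).deleteVerts {v}).coe.Preconnected :=
      fun hp => (hcon hp).false hne.some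
    rw [SimpleGraph.Preconnected] at hpre
    push_neg at hpre
    obtain ⟨a, b, hab⟩ := hpre
    set K := ((⊤ : G.Subgraph).deleteVerts {v}).coe with hK
    -- reachability classes
    let Ca : Set W := {w : W | ∃ h : w ∈ ((⊤ : G.Subgraph).deleteVerts {v}).verts,
      K.Reachable a ⟨w, h⟩}
    let Cb : Set W := {w : W | ∃ h : w ∈ ((⊤ : G.Subgraph).deleteVerts {v}).verts,
      K.Reachable b ⟨w, h⟩}
    have hvmem : ∀ w : W, w ≠ v → w ∈ ((⊤ : G.Subgraph).deleteVerts {v}).verts :=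
      fun w h => ⟨trivial, h⟩
    have hvCa : v ∉ Ca := by rintro ⟨⟨-, h⟩, -⟩; exact h rfl
    have hvCb : v ∉ Cb := by rintro ⟨⟨-, h⟩, -⟩; exact h rfl
    have hclosed : ∀ (c : ((⊤ : G.Subgraph).deleteVerts {v}).verts)
        (Cc : Set W), Cc = {w : W | ∃ h : w ∈ ((⊤ : G.Subgraph).deleteVerts {v}).verts,
          K.Reachable c ⟨w, h⟩} →
        ∀ w ∈ Cc, ∀ z, G.Adj w z → z ≠ v → z ∈ Cc := by
      rintro c Cc rfl w ⟨hwm, hwr⟩ z hadj hzv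
      have hzm := hvmem z hzv
      have hKadj : K.Adj ⟨w, hwm⟩ ⟨z, hzm⟩ := by
        simp only [hK, SimpleGraph.Subgraph.coe_adj, SimpleGraph.Subgraph.deleteVerts_adj]
        refine ⟨trivial, ?_, trivial, ?_, hadj⟩
        · exact hwm.2
        · exact hzm.2
      exact ⟨hzm, hwr.trans hKadj.reachable⟩
    have haCa : (a : W) ∈ Ca := ⟨a.2, by rw [Subtype.coe_eta]⟩
    have hbCb : (b : W) ∈ Cb := ⟨b.2, by rw [Subtype.coe_eta]⟩
    have hdisj : ∀ w, w ∈ Ca → w ∈ Cb → False := by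
      rintro w ⟨h1, hr1⟩ ⟨h2, hr2⟩
      exact hab (hr1.trans hr2.symm)
    obtain ⟨w1, hw1, w2, hw2, hww, hadjw1, hadjw2⟩ :=
      two_neighbors hfc v Ca hvCa (hclosed a Ca rfl) ⟨a, haCa⟩
    obtain ⟨x1, hx1, x2, hx2, hxx, hadjx1, hadjx2⟩ :=
      two_neighbors hfc v Cb hvCb (hclosed b Cb rfl) ⟨b, hbCb⟩
    -- four distinct neighbours of v
    have h4 : 4 ≤ Nat.card {w // G.Adj v w} := by
      cases nonempty_fintype W
      rw [Nat.card_eq_fintype_card]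
      have hcard : ({⟨w1, hadjw1⟩, ⟨w2, hadjw2⟩, ⟨x1, hadjx1⟩, ⟨x2, hadjx2⟩} :
          Finset {w // G.Adj v w}).card = 4 := by
        rw [Finset.card_insert_of_notMem, Finset.card_insert_of_notMem,
          Finset.card_insert_of_notMem, Finset.card_singleton]
        · simp only [Finset.mem_singleton, Subtype.mk.injEq]
          exact hxx
        · simp only [Finset.mem_insert, Finset.mem_singleton, Subtype.mk.injEq]
          push_neg
          exact ⟨fun h => hdisj w2 hw2 (h ▸ hx1), fun h => hdisj w2 hw2 (h ▸ hx2)⟩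
        · simp only [Finset.mem_insert, Finset.mem_singleton, Subtype.mk.injEq]
          push_neg
          exact ⟨hww, fun h => hdisj w1 hw1 (h ▸ hx1), fun h => hdisj w1 hw1 (h ▸ hx2)⟩
      calc 4 = _ := hcard.symm
        _ ≤ Fintype.card {w // G.Adj v w} := Finset.card_le_univ _
    have := hdeg v
    omega

end Main


/-- Every non-trivial factor-critical subgraph of a fullerene graph is 2-connected. -/
theorem factorCritical_subgraph_twoConnected {V : Type} [Fintype V] (Fu : Fullerene V)
    (H : Fu.G.Subgraph) (hnt : H.verts.Nontrivial) (hfc : FactorCritical H.coe) :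
    TwoConnected H.coe := by
  letI : Fintype ↥H.verts := (Set.toFinite H.verts).fintype
  refine fc_twoConnected ?_ hfc ?_
  · exact hnt.coe_sort
  · intro v
    have hinj : Function.Injective (fun p : {w // H.coe.Adj v w} =>
        (⟨(p.1 : V), H.adj_sub p.2⟩ :
          {w // Fu.G.Adj (v : V) w})) := by
      rintro ⟨⟨p, hp⟩, h1⟩ ⟨⟨q, hq⟩, h2⟩ h
      simp only [Subtype.mk.injEq] at h ⊢
      exact h
    have := Nat.card_le_card_of_injective _ hinj
    rw [Fu.cubic (v : V)] at this
    exact this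
end

section
/- Let F be a fullerene graph without non-trivial cyclic 5-edge-cuts. If F* is a 2-connected non-trivial factor-critical subgraph of F disjoint from its complement's hexagons with |∇(F*)| = 5, then F* is a pentagon (a 5-cycle bounding a pentagonal face). -/
open SimpleGraph

section Helpers
variable {V : Type} {G : SimpleGraph V}

lemma notMem_edgeCut_of_mem_mem {X : Set V} {x y : V} (hx : x ∈ X) (hy : y ∈ X) :
    s(x,y) ∉ edgeCut G X := by
  rintro ⟨a, b, -, he, haX, hbX⟩
  rw [Sym2.eq_iff] at he
  rcases he with ⟨rfl, rfl⟩ | ⟨rfl, rfl⟩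
  · exact hbX hy
  · exact hbX hx

lemma notMem_edgeCut_of_notMem_notMem {X : Set V} {x y : V} (hx : x ∉ X) (hy : y ∉ X) :
    s(x,y) ∉ edgeCut G X := by
  rintro ⟨a, b, -, he, haX, hbX⟩
  rw [Sym2.eq_iff] at he
  rcases he with ⟨rfl, rfl⟩ | ⟨rfl, rfl⟩
  · exact hx haX
  · exact hy haX

lemma walk_stays (X : Set V) {C : Set (Sym2 V)} (hC : C = edgeCut G X) : ∀ {a b : V},
    (G.deleteEdges C).Walk a b → a ∈ X → b ∈ X := by
  subst hC
  intro a b p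
  induction p with
  | nil => exact id
  | cons h q ih =>
    intro ha
    rename_i u m c
    have hadj : G.Adj u m ∧ s(u, m) ∉ edgeCut G X := deleteEdges_adj.mp h
    by_cases hm : m ∈ X
    · exact ih hm
    · exact absurd ⟨u, m, hadj.1, rfl, ha, hm⟩ hadj.2

lemma walk_union_stays {A B : Set V} (hd : ∀ x, x ∈ A → x ∉ B)
    (hAB : edgeCut G A = edgeCut G B) : ∀ {a b : V},
    G.Walk a b → a ∈ A ∪ B → b ∈ A ∪ B := by
  intro a b p
  induction p with
  | nil => exact id
  | cons h q ih =>
    intro ha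
    rename_i u m c
    apply ih
    rcases ha with ha | ha
    · by_cases hm : m ∈ A
      · exact Or.inl hm
      · have hc : s(u, m) ∈ edgeCut G B := hAB ▸ ⟨u, m, h, rfl, ha, hm⟩
        obtain ⟨p', q', -, he, hpB, hqB⟩ := hc
        rw [Sym2.eq_iff] at he
        rcases he with ⟨rfl, rfl⟩ | ⟨rfl, rfl⟩
        · exact absurd hpB (hd _ ha)
        · exact Or.inr hpB
    · by_cases hm : m ∈ B
      · exact Or.inr hm
      · have hc : s(u, m) ∈ edgeCut G A := hAB.symm ▸ ⟨u, m, h, rfl, ha, hm⟩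
        obtain ⟨p', q', -, he, hpA, hqA⟩ := hc
        rw [Sym2.eq_iff] at he
        rcases he with ⟨rfl, rfl⟩ | ⟨rfl, rfl⟩
        · exact absurd ha (hd _ hpA)
        · exact Or.inl hpA

lemma exists_edge_of_mem_support : ∀ {u v x : V} (p : G.Walk u v), ¬p.Nil →
    x ∈ p.support → ∃ e ∈ p.edges, x ∈ e := by
  intro u v x p
  induction p with
  | nil => intro h; simp at h
  | cons h q ih =>
    rename_i a m c
    intro _ hx
    rcases List.mem_cons.mp (by simpa using hx) with rfl | hx'
    · exact ⟨s(x, m), by simp, Sym2.mem_mk_left _ _⟩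
    · by_cases hq : q.Nil
      · have : x = c := by
          cases q with
          | nil => simpa using hx'
          | cons _ _ => simp [Walk.Nil] at hq
        subst this
        exact ⟨s(a, m), by simp, by
          have : x = m := by cases q with
            | nil => rfl
            | cons _ _ => simp [Walk.Nil] at hq
          rw [this]; exact Sym2.mem_mk_right _ _⟩
      · obtain ⟨e, he, hxe⟩ := ih hq hx'
        exact ⟨e, by simp [he], hxe⟩

lemma mem_support_of_mem_edge {u v x : V} (p : G.Walk u v) {e : Sym2 V}
    (he : e ∈ p.edges) (hx : x ∈ e) : x ∈ p.support := by
  obtain ⟨y, rfl⟩ := Sym2.mem_iff_exists.mp hx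
  exact p.fst_mem_support_of_mem_edges he

lemma end_mem_tail_support : ∀ {u v : V} (p : G.Walk u v), ¬p.Nil → v ∈ p.support.tail := by
  intro u v p
  induction p with
  | nil => intro h; simp at h
  | cons h q ih =>
    intro _
    simp only [Walk.support_cons, List.tail_cons]
    exact q.end_mem_support

end Helpers


section CycleHelpers
variable {V : Type} {G : SimpleGraph V}

lemma cycle_support_set_eq_tail {v : V} (c : G.Walk v v) (hnil : ¬c.Nil) :
    {x | x ∈ c.support} = {x | x ∈ c.support.tail} := by
  ext x
  simp only [Set.mem_setOf_eq]
  constructor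
  · intro hx
    rw [c.support_eq_cons] at hx
    rcases List.mem_cons.mp hx with rfl | hx'
    · have := end_mem_tail_support c hnil
      exact this
    · exact hx'
  · exact List.mem_of_mem_tail

lemma cycle_support_set_ncard {v : V} {c : G.Walk v v} (hc : c.IsCycle) :
    {x | x ∈ c.support}.ncard = c.length := by
  classical
  rw [cycle_support_set_eq_tail c hc.not_nil]
  have h1 : {x | x ∈ c.support.tail} = ↑c.support.tail.toFinset := by
    ext x; simp
  rw [h1, Set.ncard_coe_finset, List.toFinset_card_of_nodup hc.support_nodup]
  have h2 := c.length_support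
  have h3 : c.support.length = c.support.tail.length + 1 := by
    conv_lhs => rw [c.support_eq_cons]
    rfl
  omega

lemma cycle_edges_set_ncard {v : V} {c : G.Walk v v} (hc : c.IsCycle) :
    {e | e ∈ c.edges}.ncard = c.length := by
  classical
  have h1 : {e | e ∈ c.edges} = ↑c.edges.toFinset := by ext x; simp
  rw [h1, Set.ncard_coe_finset, List.toFinset_card_of_nodup hc.edges_nodup,
    c.length_edges]

lemma cycle_two_nbrs [DecidableEq V] {v x : V} {c : G.Walk v v} (hc : c.IsCycle) (hx : x ∈ c.support) :
    ∃ n1 n2, n1 ≠ n2 ∧ s(x,n1) ∈ c.edges ∧ s(x,n2) ∈ c.edges := by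
  have hrot := hc.rotate hx
  set c' := c.rotate x hx with hc'def
  have hedges : ∀ e, e ∈ c'.edges ↔ e ∈ c.edges := fun e =>
    (c.rotate_edges x hx).mem_iff
  cases hcc : c' with
  | nil => rw [hcc] at hrot; exact absurd rfl hrot.ne_nil
  | cons h q =>
    rename_i m
    -- first neighbor m ; last neighbor from q.reverse
    rw [hcc] at hrot
    have hq : ¬q.Nil := by
      intro hn
      have h3 := hrot.three_le_length
      rw [Walk.length_cons, Walk.nil_iff_length_eq.mp hn] at h3
      omega
    have hqr : ¬q.reverse.Nil := by
      rwa [Walk.nil_iff_length_eq, Walk.length_reverse, ← Walk.nil_iff_length_eq]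
    obtain ⟨n2, hadj2, q2, hq2⟩ := Walk.not_nil_iff.mp hqr
    have he2 : s(x, n2) ∈ q.edges := by
      have : s(x, n2) ∈ q.reverse.edges := by rw [hq2]; simp
      rwa [Walk.edges_reverse, List.mem_reverse] at this
    have hcyc := (Walk.cons_isCycle_iff q h).mp hrot
    have hne : m ≠ n2 := by
      rintro rfl
      exact hcyc.2 he2
    refine ⟨m, n2, hne, ?_, ?_⟩
    · rw [← hedges, hcc]; simp
    · rw [← hedges, hcc]; simp [he2]

lemma cycle_mem_support_rotate [DecidableEq V] {v x y : V} (c : G.Walk v v) (hc : c.IsCycle)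
    (hx : x ∈ c.support) (hy : y ∈ c.support) : y ∈ (c.rotate x hx).support := by
  have h1 : {z : V | z ∈ (c.rotate x hx).support} = {z | z ∈ c.support} := by
    rw [cycle_support_set_eq_tail c hc.not_nil,
      cycle_support_set_eq_tail _ (hc.rotate hx).not_nil]
    ext z
    exact (c.support_rotate x hx).mem_iff
  have : y ∈ {z : V | z ∈ (c.rotate x hx).support} := by rw [h1]; exact hy
  exact this

end CycleHelpers



section TwoConnHelpers
variable {W : Type} {Γ : SimpleGraph W}

lemma exists_adj_of_reachable_ne {a b : W} (h : Γ.Reachable a b) (hne : a ≠ b) :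
    ∃ m, Γ.Adj a m := by
  obtain ⟨p⟩ := h
  cases p with
  | nil => exact absurd rfl hne
  | cons h' q => exact ⟨_, h'⟩

lemma exists_notMem_pair (hcard : 3 ≤ Nat.card W) (x u : W) :
    ∃ z : W, z ≠ x ∧ z ≠ u := by
  have hfin : Finite W := (Nat.card_pos_iff.mp (by omega)).2
  have h1 : (Set.univ : Set W).ncard = Nat.card W := Set.ncard_univ W
  have h2 : ({x, u} : Set W).ncard ≤ 2 := by
    refine le_trans (Set.ncard_insert_le _ _) ?_
    simp [Set.ncard_singleton]
  have hns : ¬(Set.univ : Set W) ⊆ {x, u} := by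
    intro hsub
    have := Set.ncard_le_ncard hsub (Set.toFinite _)
    omega
  obtain ⟨z, -, hz⟩ := Set.not_subset.mp hns
  refine ⟨z, ?_, ?_⟩ <;> intro hzz <;> exact hz (by simp [hzz])

lemma no_cut_nbr (hcard : 3 ≤ Nat.card W)
    (hdel : ∀ v : W, ((⊤ : Γ.Subgraph).deleteVerts {v}).coe.Connected)
    {x u : W} (hxu : x ≠ u) (hnb : ∀ m, Γ.Adj x m → m = u) : False := by
  obtain ⟨z, hzx, hzu⟩ := exists_notMem_pair hcard x u
  have conn := hdel u
  have hxv : x ∈ ((⊤ : Γ.Subgraph).deleteVerts {u}).verts := by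
    simp [Subgraph.deleteVerts_verts, hxu]
  have hzv : z ∈ ((⊤ : Γ.Subgraph).deleteVerts {u}).verts := by
    simp [Subgraph.deleteVerts_verts, hzu]
  have hreach := conn.preconnected ⟨x, hxv⟩ ⟨z, hzv⟩
  have hne : (⟨x, hxv⟩ : ((⊤ : Γ.Subgraph).deleteVerts {u}).verts) ≠ ⟨z, hzv⟩ := by
    intro hcontra
    exact hzx (congrArg Subtype.val hcontra).symm
  obtain ⟨m, hm⟩ := exists_adj_of_reachable_ne hreach hne
  rw [Subgraph.coe_adj, Subgraph.deleteVerts_adj] at hm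
  obtain ⟨-, -, -, hmu, hadj⟩ := hm
  rw [Subgraph.top_adj] at hadj
  exact hmu (by simp [hnb _ hadj])

lemma adj_of_unique_nbrs (hcard : 3 ≤ Nat.card W)
    (hdel : ∀ v : W, ((⊤ : Γ.Subgraph).deleteVerts {v}).coe.Connected)
    {x y q : W} (hxq : x ≠ q)
    (hnb : ∀ m, Γ.Adj x m → m = y ∨ m = q) : Γ.Adj x y := by
  by_contra hne
  refine no_cut_nbr hcard hdel hxq (fun m hm => ?_)
  rcases hnb m hm with rfl | rfl
  · exact absurd hm hne
  · rfl

lemma conn_of_two (hcard : 3 ≤ Nat.card W)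
    (hdel : ∀ v : W, ((⊤ : Γ.Subgraph).deleteVerts {v}).coe.Connected) : Γ.Connected := by
  have hne : Nonempty W := (Nat.card_pos_iff.mp (by omega)).1
  refine ⟨fun a b => ?_⟩
  by_cases hab : a = b
  · subst hab; rfl
  · obtain ⟨c, hca, hcb⟩ := exists_notMem_pair hcard a b
    have conn := hdel c
    have hav : a ∈ ((⊤ : Γ.Subgraph).deleteVerts {c}).verts :=
      ⟨trivial, fun h => hca (Set.mem_singleton_iff.mp h).symm⟩
    have hbv : b ∈ ((⊤ : Γ.Subgraph).deleteVerts {c}).verts :=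
      ⟨trivial, fun h => hcb (Set.mem_singleton_iff.mp h).symm⟩
    have hreach := conn.preconnected ⟨a, hav⟩ ⟨b, hbv⟩
    exact hreach.map (Subgraph.hom _)

lemma exists_cycle_of_two [Finite W] (hcard : 3 ≤ Nat.card W)
    (hdel : ∀ v : W, ((⊤ : Γ.Subgraph).deleteVerts {v}).coe.Connected) :
    ∃ (u : W) (p : Γ.Walk u u), p.IsCycle := by
  classical
  have hconn := conn_of_two hcard hdel
  by_contra hnc
  push_neg at hnc
  have hac : Γ.IsAcyclic := fun v c hc => hnc v c hc
  have htree : Γ.IsTree := ⟨hconn, hac⟩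
  letI : Fintype W := Fintype.ofFinite W
  letI : DecidableRel Γ.Adj := Classical.decRel _
  have hcard' : Nat.card W = Fintype.card W := Nat.card_eq_fintype_card
  have hedges := htree.card_edgeFinset
  -- every vertex has degree ≥ 2
  have hdeg : ∀ x : W, 2 ≤ Γ.degree x := by
    intro x
    by_contra hlt
    push_neg at hlt
    interval_cases h : Γ.degree x
    · -- degree 0
      obtain ⟨z, hzx, -⟩ := exists_notMem_pair hcard x x
      obtain ⟨m, hm⟩ := exists_adj_of_reachable_ne (hconn.preconnected x z) (Ne.symm hzx)
      have : m ∈ Γ.neighborFinset x := by simp [hm]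
      rw [← SimpleGraph.card_neighborFinset_eq_degree] at h
      simp [Finset.card_eq_zero.mp h] at this
    · -- degree 1
      rw [← SimpleGraph.card_neighborFinset_eq_degree] at h
      obtain ⟨u, hu⟩ := Finset.card_eq_one.mp h
      have hxu : x ≠ u := by
        intro hcontra
        have : u ∈ Γ.neighborFinset x := by simp [hu]
        rw [SimpleGraph.mem_neighborFinset] at this
        exact Γ.loopless.irrefl x (hcontra ▸ this)
      refine no_cut_nbr hcard hdel hxu (fun m hm => ?_)
      have : m ∈ Γ.neighborFinset x := by simp [hm]
      rw [hu] at this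
      simpa using this
  have hsum := SimpleGraph.sum_degrees_eq_twice_card_edges Γ
  have hge : 2 * Fintype.card W ≤ ∑ v : W, Γ.degree v := by
    calc 2 * Fintype.card W = ∑ _v : W, 2 := by
          simp [Finset.sum_const, Finset.card_univ, Nat.mul_comm]
      _ ≤ ∑ v : W, Γ.degree v := Finset.sum_le_sum (fun i _ => hdeg i)
  omega
end TwoConnHelpers

/-- In a fullerene graph without non-trivial cyclic 5-edge-cuts (i.e. every cyclic
5-edge-cut consists of the edges leaving a pentagonal face), a 2-connected non-trivial
factor-critical subgraph `F*` with `|∇(F*)| = 5` which is vertex-disjoint from some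
hexagonal face of its complement must be a pentagon, i.e. the boundary of a pentagonal
face. -/
theorem five_cut_component_is_pentagon {V : Type} [Fintype V] (Fu : Fullerene V)
    (htriv : ∀ C : Set (Sym2 V), IsCyclicEdgeCut Fu.G C → C.ncard = 5 →
      ∃ f : Fu.faces.Face, (Fu.faces.boundary f).ncard = 5 ∧
        C = edgeCut Fu.G (Fu.faceVerts f))
    (H : Fu.G.Subgraph) (hnt : H.verts.Nontrivial) (h2c : TwoConnected H.coe)
    (hfc : FactorCritical H.coe)
    (hhex : ∃ h : Fu.faces.Face, (Fu.faces.boundary h).ncard = 6 ∧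
      Disjoint (Fu.faceVerts h) H.verts)
    (hcut : (edgeCut Fu.G H.verts).ncard = 5) :
    ∃ f : Fu.faces.Face, (Fu.faces.boundary f).ncard = 5 ∧
      H.verts = Fu.faceVerts f ∧ H.edgeSet = Fu.faces.boundary f := by
  classical
  obtain ⟨h, hh6, hdisj⟩ := hhex
  obtain ⟨v1, wh, hwh, hbh⟩ := Fu.faces.boundary_cycle h
  have hbhset : Fu.faces.boundary h = {e | e ∈ wh.edges} := Set.ext hbh
  -- vertices of faces are supports of their boundary cycles
  have hfvh : Fu.faceVerts h = {x | x ∈ wh.support} := by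
    ext x
    constructor
    · rintro ⟨e, he, hxe⟩
      exact mem_support_of_mem_edge wh ((hbh e).mp he) hxe
    · intro hx
      obtain ⟨e, he, hxe⟩ := exists_edge_of_mem_support wh hwh.not_nil hx
      exact ⟨e, (hbh e).mpr he, hxe⟩
  have hwh6 : wh.length = 6 := by
    rw [← cycle_edges_set_ncard hwh, ← hbhset, hh6]
  have hfvh6 : (Fu.faceVerts h).ncard = 6 := by
    rw [hfvh, cycle_support_set_ncard hwh, hwh6]
  -- H.coe is connected
  have hHcard : 3 ≤ Nat.card H.verts := h2c.1
  have hHconn : H.coe.Connected := conn_of_two hHcard h2c.2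
  -- the cut
  set C := edgeCut Fu.G H.verts with hCdef
  -- hexagon edges avoid C
  have hhexavoid : ∀ e ∈ wh.edges, e ∉ C := by
    intro e he hec
    obtain ⟨a, b, -, rfl, haH, hbH⟩ := hec
    have : a ∈ Fu.faceVerts h := ⟨_, (hbh _).mpr he, Sym2.mem_mk_left _ _⟩
    exact (hdisj.le_bot ⟨this, haH⟩)
  -- hom from H.coe to deleteEdges C
  have hmapadj : ∀ {a b : ↥H.verts}, H.coe.Adj a b →
      (Fu.G.deleteEdges C).Adj a.val b.val := by
    intro a b hab
    rw [deleteEdges_adj]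
    refine ⟨H.adj_sub hab, notMem_edgeCut_of_mem_mem a.2 b.2⟩
  let φ : H.coe →g Fu.G.deleteEdges C := ⟨fun a => a.val, hmapadj⟩
  -- walks starting in H.verts stay there
  -- H contains a cycle
  have hHcyc : ∃ (u : ↥H.verts) (p : H.coe.Walk u u), p.IsCycle :=
    exists_cycle_of_two hHcard h2c.2
  have hcec : IsCyclicEdgeCut Fu.G C := by
    refine ⟨fun e he => ?_, ?_⟩
    · obtain ⟨a, b, hab, rfl, -, -⟩ := he
      exact hab
    · obtain ⟨u, p, hp⟩ := hHcyc
      have hq2 : (wh.toDeleteEdges C hhexavoid).IsCycle :=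
        Walk.IsCycle.toDeleteEdges Fu.G C hwh hhexavoid
      refine ⟨u.val, v1, p.map φ, wh.toDeleteEdges C hhexavoid,
        hp.map Subtype.val_injective, hq2, ?_⟩
      rintro ⟨q⟩
      have hv1H : v1 ∈ H.verts := walk_stays H.verts hCdef q u.2
      have : v1 ∈ Fu.faceVerts h := by
        rw [hfvh]; exact wh.start_mem_support
      exact hdisj.le_bot ⟨this, hv1H⟩
  obtain ⟨f, hf5, hfC⟩ := htriv C hcec hcut
  obtain ⟨v0, wf, hwf, hbf⟩ := Fu.faces.boundary_cycle f
  have hbfset : Fu.faces.boundary f = {e | e ∈ wf.edges} := Set.ext hbf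
  have hfvf : Fu.faceVerts f = {x | x ∈ wf.support} := by
    ext x
    constructor
    · rintro ⟨e, he, hxe⟩
      exact mem_support_of_mem_edge wf ((hbf e).mp he) hxe
    · intro hx
      obtain ⟨e, he, hxe⟩ := exists_edge_of_mem_support wf hwf.not_nil hx
      exact ⟨e, (hbf e).mpr he, hxe⟩
  have hwf5 : wf.length = 5 := by
    rw [← cycle_edges_set_ncard hwf, ← hbfset, hf5]
  have hfvf5 : (Fu.faceVerts f).ncard = 5 := by
    rw [hfvf, cycle_support_set_ncard hwf, hwf5]
  -- boundary edges of f have both endpoints in faceVerts f, hence avoid C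
  have hbfavoid : ∀ e ∈ wf.edges, e ∉ C := by
    intro e he hec
    rw [hfC] at hec
    obtain ⟨a, b, -, rfl, -, hbX⟩ := hec
    exact hbX ⟨_, (hbf _).mpr he, Sym2.mem_mk_right _ _⟩
  -- H.verts = faceVerts f
  have hveq : H.verts = Fu.faceVerts f := by
    by_cases hint : (H.verts ∩ Fu.faceVerts f).Nonempty
    · obtain ⟨z, hzH, hzf⟩ := hint
      apply Set.eq_of_subset_of_subset
      · intro u hu
        obtain ⟨p⟩ := hHconn.preconnected ⟨z, hzH⟩ ⟨u, hu⟩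
        exact walk_stays (Fu.faceVerts f) hfC (p.map φ) hzf
      · intro y hy
        have hz' : z ∈ wf.support := by rw [hfvf] at hzf; exact hzf
        have hy' : y ∈ wf.support := by rw [hfvf] at hy; exact hy
        have hyr : y ∈ (wf.rotate z hz').support := cycle_mem_support_rotate wf hwf hz' hy'
        have htavoid : ∀ e ∈ ((wf.rotate z hz').takeUntil y hyr).edges, e ∉ C := by
          intro e he
          have h1 : e ∈ (wf.rotate z hz').edges :=
            (wf.rotate z hz').edges_takeUntil_subset hyr he
          have h2 : e ∈ wf.edges := (wf.rotate_edges z hz').mem_iff.mp h1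
          exact hbfavoid e h2
        exact walk_stays H.verts hCdef
          (((wf.rotate z hz').takeUntil y hyr).toDeleteEdges C htavoid) hzH
    · exfalso
      obtain ⟨u0, hu0⟩ := hnt.nonempty
      have hnsub : ¬(Fu.faceVerts h ⊆ Fu.faceVerts f) := by
        intro hsub
        have := Set.ncard_le_ncard hsub (Set.toFinite _)
        rw [hfvh6, hfvf5] at this; omega
      obtain ⟨w0, hw0h, hw0f⟩ := Set.not_subset.mp hnsub
      have hw0H : w0 ∉ H.verts := fun hmem => hdisj.le_bot ⟨hw0h, hmem⟩
      have hGconn := Fu.threeConnected ∅ (by simp)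
      have hu0v : u0 ∈ ((⊤ : Fu.G.Subgraph).deleteVerts ∅).verts := ⟨trivial, fun hc => hc⟩
      have hw0v : w0 ∈ ((⊤ : Fu.G.Subgraph).deleteVerts ∅).verts := ⟨trivial, fun hc => hc⟩
      obtain ⟨p⟩ := (hGconn.preconnected ⟨u0, hu0v⟩ ⟨w0, hw0v⟩).map
        (Subgraph.hom _)
      have hd : ∀ x, x ∈ H.verts → x ∉ Fu.faceVerts f := fun x hx hxf => hint ⟨x, hx, hxf⟩
      have hAB : edgeCut Fu.G H.verts = edgeCut Fu.G (Fu.faceVerts f) := hCdef.symm.trans hfC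
      have hres := walk_union_stays hd hAB p (Or.inl hu0)
      rcases hres with h' | h'
      · exact hw0H h'
      · exact hw0f h'
  have hedge : H.edgeSet = Fu.faces.boundary f := by
    have hC5 : C.ncard = 5 := hcut
    have hcub : ∀ x : V, {w | Fu.G.Adj x w}.ncard = 3 := by
      intro x
      rw [← Nat.card_coe_set_eq]
      exact Fu.cubic x
    have hnbrs : ∀ x ∈ Fu.faceVerts f, ∃ n1 n2 : V, n1 ≠ n2 ∧
        s(x,n1) ∈ wf.edges ∧ s(x,n2) ∈ wf.edges ∧ n1 ∈ Fu.faceVerts f ∧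
        n2 ∈ Fu.faceVerts f ∧ Fu.G.Adj x n1 ∧ Fu.G.Adj x n2 := by
      intro x hx
      obtain ⟨n1, n2, hne, he1, he2⟩ := cycle_two_nbrs hwf (by rwa [hfvf] at hx)
      exact ⟨n1, n2, hne, he1, he2,
        by rw [hfvf]; exact mem_support_of_mem_edge wf he1 (Sym2.mem_mk_right _ _),
        by rw [hfvf]; exact mem_support_of_mem_edge wf he2 (Sym2.mem_mk_right _ _),
        wf.adj_of_mem_edges he1, wf.adj_of_mem_edges he2⟩
    have hout : ∀ x ∈ Fu.faceVerts f, ∃ b, b ∉ Fu.faceVerts f ∧ Fu.G.Adj x b := by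
      have hmemC : ∀ e ∈ C, ∃ a b, Fu.G.Adj a b ∧ e = s(a,b) ∧
          a ∈ Fu.faceVerts f ∧ b ∉ Fu.faceVerts f := by
        intro e he; rw [hfC] at he; exact he
      set F : ∀ e ∈ C, V := fun e he => (hmemC e he).choose with hFdef
      have hFspec : ∀ e he, ∃ b, Fu.G.Adj (F e he) b ∧ e = s(F e he, b) ∧
          (F e he) ∈ Fu.faceVerts f ∧ b ∉ Fu.faceVerts f := fun e he =>
        (hmemC e he).choose_spec
      have hFX : ∀ e he, F e he ∈ Fu.faceVerts f := fun e he =>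
        (hFspec e he).choose_spec.2.2.1
      have hinj : ∀ e1 e2 he1 he2, F e1 he1 = F e2 he2 → e1 = e2 := by
        intro e1 e2 he1 he2 heq
        by_contra hneq
        obtain ⟨b1, hadj1, hrep1, hX1, hb1⟩ := hFspec e1 he1
        obtain ⟨b2, hadj2, hrep2, hX2, hb2⟩ := hFspec e2 he2
        rw [heq] at hadj1 hrep1 hX1
        have hb12 : b1 ≠ b2 := by
          rintro rfl; exact hneq (hrep1.trans hrep2.symm)
        obtain ⟨n1, n2, hn12, -, -, hn1X, hn2X, ha1, ha2⟩ := hnbrs _ hX2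
        have hn1b1 : n1 ≠ b1 := fun hh => hb1 (hh ▸ hn1X)
        have hn1b2 : n1 ≠ b2 := fun hh => hb2 (hh ▸ hn1X)
        have hn2b1 : n2 ≠ b1 := fun hh => hb1 (hh ▸ hn2X)
        have hn2b2 : n2 ≠ b2 := fun hh => hb2 (hh ▸ hn2X)
        have hsub : ({n1, n2, b1, b2} : Set V) ⊆ {w | Fu.G.Adj (F e2 he2) w} := by
          rintro w (rfl | rfl | rfl | rfl)
          · exact ha1
          · exact ha2
          · exact hadj1
          · exact hadj2
        have hcard4 : ({n1, n2, b1, b2} : Set V).ncard = 4 := by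
          rw [Set.ncard_insert_of_notMem, Set.ncard_insert_of_notMem,
            Set.ncard_insert_of_notMem, Set.ncard_singleton]
          · intro hmem
            exact hb12 (Set.mem_singleton_iff.mp hmem)
          · intro hmem
            rcases Set.mem_insert_iff.mp hmem with hh | hh
            · exact hn2b1 hh
            · exact hn2b2 (Set.mem_singleton_iff.mp hh)
          · intro hmem
            rcases Set.mem_insert_iff.mp hmem with hh | hh
            · exact hn12 hh
            · rcases Set.mem_insert_iff.mp hh with hh' | hh'
              · exact hn1b1 hh'
              · exact hn1b2 (Set.mem_singleton_iff.mp hh')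
        have hle := Set.ncard_le_ncard hsub (Set.toFinite _)
        rw [hcard4, hcub _] at hle
        omega
      have hsurj := Set.surj_on_of_inj_on_of_ncard_le F hFX hinj
        (by rw [hfvf5, hC5]) (Set.toFinite _)
      intro x hx
      obtain ⟨e, he, hxe⟩ := hsurj x hx
      obtain ⟨b, hadj, hrep, -, hbX⟩ := hFspec e he
      rw [← hxe] at hadj
      exact ⟨b, hbX, hadj⟩
    have hnbreq : ∀ x ∈ Fu.faceVerts f, ∃ n1 n2 : V, n1 ≠ n2 ∧
        s(x,n1) ∈ wf.edges ∧ s(x,n2) ∈ wf.edges ∧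
        n1 ∈ Fu.faceVerts f ∧ n2 ∈ Fu.faceVerts f ∧
        (∀ m, Fu.G.Adj x m → m ∈ Fu.faceVerts f → m = n1 ∨ m = n2) := by
      intro x hx
      obtain ⟨n1, n2, hn12, he1, he2, hn1X, hn2X, ha1, ha2⟩ := hnbrs x hx
      obtain ⟨b, hbX, hab⟩ := hout x hx
      have hbn1 : n1 ≠ b := fun hh => hbX (hh ▸ hn1X)
      have hbn2 : n2 ≠ b := fun hh => hbX (hh ▸ hn2X)
      have hsub : ({n1, n2, b} : Set V) ⊆ {w | Fu.G.Adj x w} := by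
        rintro w (rfl | rfl | rfl)
        · exact ha1
        · exact ha2
        · exact hab
      have hcard3 : ({n1, n2, b} : Set V).ncard = 3 := by
        rw [Set.ncard_insert_of_notMem, Set.ncard_insert_of_notMem,
          Set.ncard_singleton]
        · intro hmem
          exact hbn2 (Set.mem_singleton_iff.mp hmem)
        · intro hmem
          rcases Set.mem_insert_iff.mp hmem with hh | hh
          · exact hn12 hh
          · exact hbn1 (Set.mem_singleton_iff.mp hh)
      have heqs : ({n1, n2, b} : Set V) = {w | Fu.G.Adj x w} :=
        Set.eq_of_subset_of_ncard_le hsub (by rw [hcub x, hcard3]) (Set.toFinite _)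
      refine ⟨n1, n2, hn12, he1, he2, hn1X, hn2X, fun m hm hmX => ?_⟩
      have hmmem : m ∈ ({n1, n2, b} : Set V) := by rw [heqs]; exact hm
      rcases hmmem with rfl | rfl | rfl
      · exact Or.inl rfl
      · exact Or.inr rfl
      · exact absurd hmX hbX
    ext e
    refine Sym2.ind (fun x y => ?_) e
    constructor
    · intro hmem
      have hxy : H.Adj x y := Subgraph.mem_edgeSet.mp hmem
      have hxH : x ∈ H.verts := H.edge_vert hxy
      have hyH : y ∈ H.verts := H.edge_vert hxy.symm
      have hxX : x ∈ Fu.faceVerts f := by rw [← hveq]; exact hxH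
      have hyX : y ∈ Fu.faceVerts f := by rw [← hveq]; exact hyH
      obtain ⟨n1, n2, hn12, he1, he2, -, -, huniq⟩ := hnbreq x hxX
      rcases huniq y (H.adj_sub hxy) hyX with rfl | rfl
      · exact (hbf _).mpr he1
      · exact (hbf _).mpr he2
    · intro hmem
      have hew : s(x,y) ∈ wf.edges := (hbf _).mp hmem
      have hadj : Fu.G.Adj x y := wf.adj_of_mem_edges hew
      have hxX : x ∈ Fu.faceVerts f := by
        rw [hfvf]; exact mem_support_of_mem_edge wf hew (Sym2.mem_mk_left _ _)
      have hyX : y ∈ Fu.faceVerts f := by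
        rw [hfvf]; exact mem_support_of_mem_edge wf hew (Sym2.mem_mk_right _ _)
      obtain ⟨n1, n2, hn12, he1, he2, hn1X, hn2X, huniq⟩ := hnbreq x hxX
      have doit : ∀ q : V, q ∈ Fu.faceVerts f → Fu.G.Adj x q →
          (∀ m, Fu.G.Adj x m → m ∈ Fu.faceVerts f → m = y ∨ m = q) →
          s(x,y) ∈ H.edgeSet := by
        intro q hqX hxqadj huniq2
        have hxH : x ∈ H.verts := by rw [hveq]; exact hxX
        have hyH : y ∈ H.verts := by rw [hveq]; exact hyX
        have hqH : q ∈ H.verts := by rw [hveq]; exact hqX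
        have hxqne : (⟨x, hxH⟩ : ↥H.verts) ≠ ⟨q, hqH⟩ := by
          intro hcontra
          exact hxqadj.ne (congrArg Subtype.val hcontra)
        have hnb : ∀ m : ↥H.verts, H.coe.Adj ⟨x, hxH⟩ m →
            m = (⟨y, hyH⟩ : ↥H.verts) ∨ m = ⟨q, hqH⟩ := by
          intro m hm
          rw [Subgraph.coe_adj] at hm
          have hmadj : Fu.G.Adj x m.val := H.adj_sub hm
          have hmX : m.val ∈ Fu.faceVerts f := by rw [← hveq]; exact m.2
          rcases huniq2 m.val hmadj hmX with hh | hh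
          · exact Or.inl (Subtype.ext hh)
          · exact Or.inr (Subtype.ext hh)
        have hres := adj_of_unique_nbrs hHcard h2c.2 hxqne hnb
        rw [Subgraph.coe_adj] at hres
        exact Subgraph.mem_edgeSet.mpr hres
      rcases huniq y hadj hyX with rfl | rfl
      · refine doit n2 hn2X (wf.adj_of_mem_edges he2) (fun m hm hmX => huniq m hm hmX)
      · refine doit n1 hn1X (wf.adj_of_mem_edges he1)
          (fun m hm hmX => (huniq m hm hmX).symm)
  exact ⟨f, hf5, hveq, hedge⟩
end

section
/- Let B be a fragment of a fullerene graph F (a subgraph consisting of a cycle together with its interior) and let W be the set of vertices of degree 2 in B, all lying on the boundary of B. If |W| = 2, then the graph T = F − (V(B) \ W) is a single edge K₂ joining the two vertices of W. -/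
open SimpleGraph

/-- `B` is a fragment of the fullerene: a union of faces whose outer boundary (the
edges of `B` also lying on a face outside the fragment) is a single cycle — i.e. a
cycle of `F` together with its interior. -/
def Fullerene.IsFragment {V : Type} [Fintype V] (Fu : Fullerene V) (B : Fu.G.Subgraph) : Prop :=
  ∃ S : Set Fu.faces.Face,
    B.edgeSet = ⋃ f ∈ S, Fu.faces.boundary f ∧
    B.verts = {v | ∃ e ∈ B.edgeSet, v ∈ e} ∧
    ∃ (u : V) (p : Fu.G.Walk u u), p.IsCycle ∧
      {e | e ∈ B.edgeSet ∧ ∃ f, f ∉ S ∧ e ∈ Fu.faces.boundary f} = {e | e ∈ p.edges}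

/-- The set `W` of vertices of degree 2 in the fragment `B`. -/
def Fullerene.fragW {V : Type} [Fintype V] (Fu : Fullerene V) (B : Fu.G.Subgraph) : Set V :=
  {v | v ∈ B.verts ∧ Nat.card {w // B.Adj v w} = 2}

/-- The vertex set of `T = F - (V(B) \ W)`. -/
def Fullerene.fragTverts {V : Type} [Fintype V] (Fu : Fullerene V) (B : Fu.G.Subgraph) : Set V :=
  {v | v ∉ B.verts \ Fu.fragW B}


/-- In a cycle, every vertex on the cycle has two distinct neighbors joined to it
by edges of the cycle. -/
lemma cycle_two_neighbors {V : Type} {G : SimpleGraph V} [DecidableEq V] {u : V}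
    {c : G.Walk u u} (hc : c.IsCycle) {v : V} (hv : v ∈ c.support) :
    ∃ x y : V, x ≠ y ∧ s(v, x) ∈ c.edges ∧ s(v, y) ∈ c.edges := by
  set c' := c.rotate v hv with hc'def
  have hrot : ∀ e : Sym2 V, e ∈ c'.edges ↔ e ∈ c.edges := fun e =>
    (SimpleGraph.Walk.rotate_edges c v hv).mem_iff
  have hc' : c'.IsCycle := hc.rotate hv
  suffices h : ∃ x y : V, x ≠ y ∧ s(v, x) ∈ c'.edges ∧ s(v, y) ∈ c'.edges by
    obtain ⟨x, y, hxy, hx, hy⟩ := h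
    exact ⟨x, y, hxy, (hrot _).mp hx, (hrot _).mp hy⟩
  obtain ⟨w, hadj, q, hq⟩ := SimpleGraph.Walk.not_nil_iff.mp hc'.not_nil
  -- last edge of q : Walk w v, obtained from q.reverse : Walk v w
  obtain ⟨y, hadj2, r, hr⟩ := SimpleGraph.Walk.exists_eq_cons_of_ne hadj.ne q.reverse
  have hyq : s(v, y) ∈ q.edges := by
    have : s(v, y) ∈ q.reverse.edges := by rw [hr]; simp
    rwa [SimpleGraph.Walk.edges_reverse, List.mem_reverse] at this
  have hcyc := hq ▸ hc'
  rw [SimpleGraph.Walk.cons_isCycle_iff] at hcyc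
  refine ⟨w, y, ?_, ?_, ?_⟩
  · rintro rfl
    exact hcyc.2 hyq
  · rw [hq]; simp
  · rw [hq]; simp [hyq]

/-- Every vertex has at most 3 neighbors in any subgraph of the fullerene. -/
lemma frag_deg_le_three {V : Type} [Fintype V] (Fu : Fullerene V) (B : Fu.G.Subgraph)
    (v : V) : (B.neighborSet v).ncard ≤ 3 := by
  have hsub : B.neighborSet v ⊆ Fu.G.neighborSet v := fun w hw => hw.adj_sub
  have h3 : (Fu.G.neighborSet v).ncard = 3 := by
    rw [← Nat.card_coe_set_eq]
    exact Fu.cubic v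
  calc (B.neighborSet v).ncard ≤ (Fu.G.neighborSet v).ncard :=
        Set.ncard_le_ncard hsub (Set.toFinite _)
    _ = 3 := h3

/-- A vertex of `B`-degree 3 has all of its `G`-neighbors as `B`-neighbors. -/
lemma frag_deg_three_closed {V : Type} [Fintype V] (Fu : Fullerene V) (B : Fu.G.Subgraph)
    (v : V) (h3 : (B.neighborSet v).ncard = 3) {w : V} (hw : Fu.G.Adj v w) : B.Adj v w := by
  have hsub : B.neighborSet v ⊆ Fu.G.neighborSet v := fun x hx => hx.adj_sub
  have hG3 : (Fu.G.neighborSet v).ncard = 3 := by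
    rw [← Nat.card_coe_set_eq]
    exact Fu.cubic v
  have heq : B.neighborSet v = Fu.G.neighborSet v :=
    Set.eq_of_subset_of_ncard_le hsub (by omega) (Set.toFinite _)
  have : w ∈ B.neighborSet v := heq ▸ (hw : w ∈ Fu.G.neighborSet v)
  exact this

/-- Every vertex of a fragment has `B`-degree at least 2. -/
lemma frag_deg_ge_two {V : Type} [Fintype V] [DecidableEq V] (Fu : Fullerene V)
    (B : Fu.G.Subgraph) (S : Set Fu.faces.Face)
    (hE : B.edgeSet = ⋃ f ∈ S, Fu.faces.boundary f)
    (hV : B.verts = {v | ∃ e ∈ B.edgeSet, v ∈ e})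
    {v : V} (hv : v ∈ B.verts) : 2 ≤ (B.neighborSet v).ncard := by
  rw [hV] at hv
  obtain ⟨e, heB, hve⟩ := hv
  have heU : e ∈ ⋃ f ∈ S, Fu.faces.boundary f := hE ▸ heB
  simp only [Set.mem_iUnion] at heU
  obtain ⟨f, hfS, hef⟩ := heU
  obtain ⟨u0, w0, hw0c, hiff⟩ := Fu.faces.boundary_cycle f
  have hbsub : Fu.faces.boundary f ⊆ B.edgeSet := by
    rw [hE]
    exact fun e' he' => Set.mem_iUnion.mpr ⟨f, Set.mem_iUnion.mpr ⟨hfS, he'⟩⟩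
  have hew : e ∈ w0.edges := (hiff e).mp hef
  have hvs : v ∈ w0.support := by
    induction e with
    | h x y =>
      rcases Sym2.mem_iff.mp hve with rfl | rfl
      · exact w0.fst_mem_support_of_mem_edges hew
      · exact w0.snd_mem_support_of_mem_edges hew
  obtain ⟨x, y, hxy, hx, hy⟩ := cycle_two_neighbors hw0c hvs
  have hBx : B.Adj v x := SimpleGraph.Subgraph.mem_edgeSet.mp (hbsub ((hiff _).mpr hx))
  have hBy : B.Adj v y := SimpleGraph.Subgraph.mem_edgeSet.mp (hbsub ((hiff _).mpr hy))
  have hsub : ({x, y} : Set V) ⊆ B.neighborSet v := by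
    rintro z (rfl | rfl)
    · exact hBx
    · exact hBy
  calc 2 = ({x, y} : Set V).ncard := (Set.ncard_pair hxy).symm
    _ ≤ (B.neighborSet v).ncard := Set.ncard_le_ncard hsub (Set.toFinite _)

/-- If a fragment `B` of a fullerene graph has exactly two vertices of degree 2, then
`T = F - (V(B) \ W)` is a single edge `K₂` joining the two vertices of `W`. -/
theorem fragment_two_deg2_K2 {V : Type} [Fintype V] (Fu : Fullerene V)
    (B : Fu.G.Subgraph) (hB : Fu.IsFragment B) (hW : (Fu.fragW B).ncard = 2) :
    ∃ a b : V, a ≠ b ∧ Fu.fragW B = {a, b} ∧ Fu.fragTverts B = {a, b} ∧ Fu.G.Adj a b := by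
  classical
  obtain ⟨S, hE, hV, u, p, hpc, hpE⟩ := hB
  -- the two degree-2 vertices
  obtain ⟨a, b, hab, hWab⟩ := Set.ncard_eq_two.mp hW
  have hcard_eq : ∀ v : V, Nat.card {w // B.Adj v w} = (B.neighborSet v).ncard := by
    intro v
    exact Nat.card_coe_set_eq _
  have haW : a ∈ Fu.fragW B := hWab ▸ Set.mem_insert a {b}
  have hbW : b ∈ Fu.fragW B := hWab ▸ Set.mem_insert_of_mem a rfl
  have haB : a ∈ B.verts := haW.1
  have hbB : b ∈ B.verts := hbW.1
  have hdeg3 : ∀ v : V, v ∈ B.verts → v ≠ a → v ≠ b → (B.neighborSet v).ncard = 3 := by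
    intro v hvB hva hvb
    have h2 := frag_deg_ge_two Fu B S hE hV hvB
    have h3 := frag_deg_le_three Fu B v
    have hne2 : (B.neighborSet v).ncard ≠ 2 := by
      intro h
      have : v ∈ Fu.fragW B := ⟨hvB, by rw [hcard_eq]; exact h⟩
      rw [hWab] at this
      rcases this with rfl | rfl
      · exact hva rfl
      · exact hvb rfl
    omega
  -- edges of p are B-edges, supports in B.verts
  have hpB : ∀ e ∈ p.edges, e ∈ B.edgeSet := by
    intro e he
    have : e ∈ {e | e ∈ B.edgeSet ∧ ∃ f, f ∉ S ∧ e ∈ Fu.faces.boundary f} := by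
      rw [hpE]; exact he
    exact this.1
  have hsuppB : ∀ v ∈ p.support, v ∈ B.verts := by
    intro v hv
    obtain ⟨x, y, hxy, hx, _⟩ := cycle_two_neighbors hpc hv
    rw [hV]
    exact ⟨s(v, x), hpB _ hx, Sym2.mem_mk_left v x⟩
  -- find x in B.verts different from a and b
  have hlen : 3 ≤ p.length := hpc.three_le_length
  have htail_nodup : p.support.tail.Nodup := hpc.support_nodup
  have htail_len : p.support.tail.length = p.length := by
    rw [List.length_tail, SimpleGraph.Walk.length_support]
    omega
  have hx : ∃ x ∈ p.support.tail, x ≠ a ∧ x ≠ b := by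
    by_contra h
    push_neg at h
    have hsub : p.support.tail.toFinset ⊆ {a, b} := by
      intro z hz
      rw [List.mem_toFinset] at hz
      rcases Classical.em (z = a) with rfl | hza
      · simp
      · have := h z hz hza
        simp [this]
    have hc1 : p.support.tail.toFinset.card = p.support.tail.length :=
      List.toFinset_card_of_nodup htail_nodup
    have hc2 : p.support.tail.toFinset.card ≤ 2 := by
      calc p.support.tail.toFinset.card ≤ ({a, b} : Finset V).card := Finset.card_le_card hsub
        _ ≤ 2 := Finset.card_insert_le a {b} |>.trans (by simp)
    omega
  obtain ⟨x, hxt, hxa, hxb⟩ := hx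
  have hxB : x ∈ B.verts := hsuppB x (List.mem_of_mem_tail hxt)
  -- B.verts = univ
  have hUniv : B.verts = Set.univ := by
    by_contra h
    have : ∃ y, y ∉ B.verts := by
      by_contra h2
      push_neg at h2
      exact h (Set.eq_univ_iff_forall.mpr h2)
    obtain ⟨y, hyB⟩ := this
    have hya : y ≠ a := fun h => hyB (h ▸ haB)
    have hyb : y ≠ b := fun h => hyB (h ▸ hbB)
    have hSc : ({a, b} : Set V).ncard ≤ 2 := le_of_eq (Set.ncard_pair hab)
    have hconn := Fu.threeConnected {a, b} hSc
    set H := ((⊤ : Fu.G.Subgraph).deleteVerts {a, b}) with hHdef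
    have hxH : x ∈ H.verts := ⟨Set.mem_univ x, by simp [hxa, hxb]⟩
    have hyH : y ∈ H.verts := ⟨Set.mem_univ y, by simp [hya, hyb]⟩
    have hreach : H.coe.Reachable ⟨x, hxH⟩ ⟨y, hyH⟩ := hconn ⟨x, hxH⟩ ⟨y, hyH⟩
    obtain ⟨q⟩ := hreach
    obtain ⟨d, _, hdS, hdnS⟩ := q.exists_boundary_dart {z : H.verts | z.val ∈ B.verts} hxB hyB
    have hadj : Fu.G.Adj d.fst.val d.snd.val := by
      have := d.adj
      simp only [SimpleGraph.Subgraph.coe_adj, SimpleGraph.Subgraph.deleteVerts_adj,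
        SimpleGraph.Subgraph.top_adj] at this
      exact this.2.2
    have hfa : d.fst.val ≠ a := by
      have := d.fst.property.2
      simp only [Set.mem_insert_iff, Set.mem_singleton_iff, not_or] at this
      exact this.1
    have hfb : d.fst.val ≠ b := by
      have := d.fst.property.2
      simp only [Set.mem_insert_iff, Set.mem_singleton_iff, not_or] at this
      exact this.2
    have h3 := hdeg3 d.fst.val hdS hfa hfb
    have hBadj : B.Adj d.fst.val d.snd.val := frag_deg_three_closed Fu B _ h3 hadj
    exact hdnS hBadj.snd_mem
  -- a is adjacent to b in G
  have hGadj : Fu.G.Adj a b := by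
    have ha2 : (B.neighborSet a).ncard = 2 := by rw [← hcard_eq]; exact haW.2
    have hsub : B.neighborSet a ⊆ Fu.G.neighborSet a := fun w hw => hw.adj_sub
    have hG3 : (Fu.G.neighborSet a).ncard = 3 := by
      rw [← Nat.card_coe_set_eq]
      exact Fu.cubic a
    have hss : B.neighborSet a ⊂ Fu.G.neighborSet a := by
      refine ⟨hsub, fun h => ?_⟩
      have := Set.ncard_le_ncard h (Set.toFinite _)
      omega
    obtain ⟨w, hwG, hwB⟩ := Set.exists_of_ssubset hss
    have hGaw : Fu.G.Adj a w := hwG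
    by_cases hwb : w = b
    · exact hwb ▸ hGaw
    · exfalso
      have hwa : w ≠ a := hGaw.ne'
      have hwv : w ∈ B.verts := hUniv ▸ Set.mem_univ w
      have h3 := hdeg3 w hwv hwa hwb
      have : B.Adj w a := frag_deg_three_closed Fu B _ h3 hGaw.symm
      exact hwB this.symm
  refine ⟨a, b, hab, hWab, ?_, hGadj⟩
  ext v
  simp only [Fullerene.fragTverts, Set.mem_setOf_eq, Set.mem_diff, hUniv, Set.mem_univ,
    true_and, not_not]
  constructor
  · intro hv
    rw [hWab] at hv
    exact hv
  · intro hv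
    rw [hWab]
    exact hv
end

section
/- Let F be a fullerene graph, H the vertex set of two disjoint hexagonal faces h₁, h₂, and A a vertex set of F−H such that every component of F−H−A is factor-critical and the number of such components exceeds |A|. Then, writing s(D) = Σ_{F*∈D} (|∇(F*)|−3)/2 over the components D of F−H−A, the inequality |E(A,H)| + |E(A,A)| + s(D) ≤ (1/2)|∇(H)| − 3 holds. -/
open SimpleGraph

section Helpers

open scoped Classical

variable {V : Type}

lemma edgesBetween_comm (G : SimpleGraph V) (X Y : Set V) :
    edgesBetween G X Y = edgesBetween G Y X := by
  ext e
  constructor <;> rintro ⟨a, b, hab, rfl, ha, hb⟩ <;>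
    exact ⟨b, a, hab.symm, Sym2.eq_swap.symm, hb, ha⟩

lemma edgeCut_eq_edgesBetween (G : SimpleGraph V) (X : Set V) :
    edgeCut G X = edgesBetween G X Xᶜ := rfl

lemma edgesBetween_union_left (G : SimpleGraph V) (X Y Z : Set V) :
    edgesBetween G (X ∪ Y) Z = edgesBetween G X Z ∪ edgesBetween G Y Z := by
  ext e
  constructor
  · rintro ⟨a, b, hab, rfl, ha | ha, hb⟩
    · exact Or.inl ⟨a, b, hab, rfl, ha, hb⟩
    · exact Or.inr ⟨a, b, hab, rfl, ha, hb⟩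
  · rintro (⟨a, b, hab, rfl, ha, hb⟩ | ⟨a, b, hab, rfl, ha, hb⟩)
    · exact ⟨a, b, hab, rfl, Or.inl ha, hb⟩
    · exact ⟨a, b, hab, rfl, Or.inr ha, hb⟩

lemma edgesBetween_union_right (G : SimpleGraph V) (X Y Z : Set V) :
    edgesBetween G X (Y ∪ Z) = edgesBetween G X Y ∪ edgesBetween G X Z := by
  rw [edgesBetween_comm, edgesBetween_union_left, edgesBetween_comm G Y,
    edgesBetween_comm G Z]

lemma edgesBetween_iUnion_left {ι : Type*} (G : SimpleGraph V) (f : ι → Set V) (Z : Set V) :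
    edgesBetween G (⋃ i, f i) Z = ⋃ i, edgesBetween G (f i) Z := by
  ext e
  constructor
  · rintro ⟨a, b, hab, rfl, ha, hb⟩
    obtain ⟨i, hi⟩ := Set.mem_iUnion.mp ha
    exact Set.mem_iUnion.mpr ⟨i, a, b, hab, rfl, hi, hb⟩
  · intro h
    obtain ⟨i, a, b, hab, rfl, ha, hb⟩ := Set.mem_iUnion.mp h
    exact ⟨a, b, hab, rfl, Set.mem_iUnion.mpr ⟨i, ha⟩, hb⟩

lemma edgesBetween_disjoint {G : SimpleGraph V} {X Y X' Y' : Set V}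
    (h1 : Disjoint X X' ∨ Disjoint Y Y') (h2 : Disjoint X Y' ∨ Disjoint Y X') :
    Disjoint (edgesBetween G X Y) (edgesBetween G X' Y') := by
  rw [Set.disjoint_left]
  rintro e ⟨a, b, hab, rfl, ha, hb⟩ ⟨a', b', hab', he, ha', hb'⟩
  rw [Sym2.eq_iff] at he
  rcases he with ⟨rfl, rfl⟩ | ⟨rfl, rfl⟩
  · rcases h1 with h | h
    · exact h.ne_of_mem ha ha' rfl
    · exact h.ne_of_mem hb hb' rfl
  · rcases h2 with h | h
    · exact h.ne_of_mem ha hb' rfl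
    · exact h.ne_of_mem hb ha' rfl

lemma ncard_iUnion_of_disjoint {α ι : Type*} [Fintype ι] [Finite α] (f : ι → Set α)
    (hd : Pairwise (Function.onFun Disjoint f)) :
    (⋃ i, f i).ncard = ∑ i, (f i).ncard := by
  classical
  haveI := Fintype.ofFinite α
  have h1 : (⋃ i, f i) = ↑(Finset.univ.biUnion (fun i => (f i).toFinset)) := by
    ext x; simp
  rw [h1, Set.ncard_coe_finset, Finset.card_biUnion]
  · exact Finset.sum_congr rfl fun i _ => by rw [Set.ncard_eq_toFinset_card']
  · intro i _ j _ hij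
    simpa [Finset.disjoint_left, Set.disjoint_left, Set.mem_toFinset] using
      (hd hij).mono_left le_rfl

section CountingPairs

variable [Fintype V] (G : SimpleGraph V)

lemma pairs_card_eq (X Y : Set V) (hXY : Disjoint X Y) :
    (Finset.univ.filter (fun p : V × V => p.1 ∈ X ∧ p.2 ∈ Y ∧ G.Adj p.1 p.2)).card
      = (edgesBetween G X Y).ncard := by
  classical
  rw [Set.ncard_eq_toFinset_card']
  apply Finset.card_bij (fun p _ => s(p.1, p.2))
  · rintro ⟨a, b⟩ hp
    simp only [Finset.mem_filter] at hp
    simp only [Set.mem_toFinset]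
    exact ⟨a, b, hp.2.2.2, rfl, hp.2.1, hp.2.2.1⟩
  · rintro ⟨a, b⟩ ha ⟨a', b'⟩ hb he
    simp only [Finset.mem_filter] at ha hb
    rw [Sym2.eq_iff] at he
    rcases he with ⟨rfl, rfl⟩ | ⟨rfl, rfl⟩
    · rfl
    · exact absurd rfl (hXY.ne_of_mem ha.2.1 hb.2.2.1)
  · intro e he
    simp only [Set.mem_toFinset] at he
    obtain ⟨a, b, hab, rfl, ha, hb⟩ := he
    exact ⟨(a, b), by simp [ha, hb, hab], rfl⟩

lemma pairs_card_eq_self (X : Set V) :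
    (Finset.univ.filter (fun p : V × V => p.1 ∈ X ∧ p.2 ∈ X ∧ G.Adj p.1 p.2)).card
      = 2 * (edgesBetween G X X).ncard := by
  classical
  rw [Set.ncard_eq_toFinset_card']
  rw [Finset.card_eq_sum_card_fiberwise
    (f := fun p : V × V => s(p.1, p.2)) (t := (edgesBetween G X X).toFinset) ?_]
  · rw [Finset.sum_congr rfl (g := fun _ => 2) ?_, Finset.sum_const, smul_eq_mul, mul_comm]
    intro e he
    simp only [Set.mem_toFinset] at he
    obtain ⟨a, b, hab, rfl, ha, hb⟩ := he
    have : (Finset.univ.filter (fun p : V × V => p.1 ∈ X ∧ p.2 ∈ X ∧ G.Adj p.1 p.2)).filter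
        (fun p => s(p.1, p.2) = s(a, b)) = {(a, b), (b, a)} := by
      ext ⟨x, y⟩
      simp only [Finset.mem_filter, Finset.mem_univ, true_and, Finset.mem_insert,
        Finset.mem_singleton, Sym2.eq_iff, Prod.mk.injEq]
      constructor
      · rintro ⟨-, ⟨rfl, rfl⟩ | ⟨rfl, rfl⟩⟩
        · exact Or.inl ⟨rfl, rfl⟩
        · exact Or.inr ⟨rfl, rfl⟩
      · rintro (⟨rfl, rfl⟩ | ⟨rfl, rfl⟩)
        · exact ⟨⟨ha, hb, hab⟩, Or.inl ⟨rfl, rfl⟩⟩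
        · exact ⟨⟨hb, ha, hab.symm⟩, Or.inr ⟨rfl, rfl⟩⟩
    rw [this]
    rw [Finset.card_insert_of_notMem (by simp [hab.ne]), Finset.card_singleton]
  · rintro ⟨a, b⟩ hp
    simp only [Finset.mem_coe, Finset.mem_filter] at hp
    simp only [Finset.mem_coe, Set.mem_toFinset]
    exact ⟨a, b, hp.2.2.2, rfl, hp.2.1, hp.2.2.1⟩

lemma degree_sum_split (h3 : ∀ v : V, Nat.card {w // G.Adj v w} = 3)
    (A B C : Set V) (hU : A ∪ B ∪ C = Set.univ)
    (hAB : Disjoint A B) (hAC : Disjoint A C) (hBC : Disjoint B C) :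
    3 * A.ncard = 2 * (edgesBetween G A A).ncard + (edgesBetween G A B).ncard
      + (edgesBetween G A C).ncard := by
  classical
  have hdeg : ∀ v : V, G.degree v = 3 := by
    intro v
    rw [← h3 v, ← card_neighborSet_eq_degree, Nat.card_eq_fintype_card]
    rfl
  set P := Finset.univ.filter (fun p : V × V => p.1 ∈ A ∧ G.Adj p.1 p.2) with hP
  have hPcard : P.card = 3 * A.ncard := by
    rw [Set.ncard_eq_toFinset_card']
    rw [Finset.card_eq_sum_card_fiberwise (f := Prod.fst) (t := A.toFinset)
      (by rintro ⟨a, b⟩ hp; rw [hP] at hp; simp only [Finset.mem_coe, Finset.mem_filter] at hp;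
          simpa using hp.2.1)]
    rw [Finset.sum_congr rfl (g := fun _ => 3) ?_, Finset.sum_const, smul_eq_mul, mul_comm]
    intro a ha
    simp only [Set.mem_toFinset] at ha
    have : P.filter (fun p => p.1 = a) = (G.neighborFinset a).image (fun b => (a, b)) := by
      ext ⟨x, y⟩
      simp only [hP, Finset.mem_filter, Finset.mem_univ, true_and, Finset.mem_image,
        mem_neighborFinset, Prod.mk.injEq]
      constructor
      · rintro ⟨⟨-, hadj⟩, rfl⟩; exact ⟨y, hadj, rfl, rfl⟩
      · rintro ⟨b, hb, rfl, rfl⟩; exact ⟨⟨ha, hb⟩, rfl⟩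
    rw [this, Finset.card_image_of_injective _ (fun x y h => by simpa using h),
      ← SimpleGraph.degree, hdeg]
  have hsplit : P = (Finset.univ.filter (fun p : V × V => p.1 ∈ A ∧ p.2 ∈ A ∧ G.Adj p.1 p.2))
      ∪ (Finset.univ.filter (fun p : V × V => p.1 ∈ A ∧ p.2 ∈ B ∧ G.Adj p.1 p.2))
      ∪ (Finset.univ.filter (fun p : V × V => p.1 ∈ A ∧ p.2 ∈ C ∧ G.Adj p.1 p.2)) := by
    ext ⟨x, y⟩
    simp only [hP, Finset.mem_filter, Finset.mem_univ, true_and, Finset.mem_union]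
    constructor
    · rintro ⟨hx, hadj⟩
      have : y ∈ A ∪ B ∪ C := hU ▸ Set.mem_univ y
      rcases this with (hy | hy) | hy
      · exact Or.inl (Or.inl ⟨hx, hy, hadj⟩)
      · exact Or.inl (Or.inr ⟨hx, hy, hadj⟩)
      · exact Or.inr ⟨hx, hy, hadj⟩
    · rintro ((⟨hx, -, hadj⟩ | ⟨hx, -, hadj⟩) | ⟨hx, -, hadj⟩) <;> exact ⟨hx, hadj⟩
  have hd1 : Disjoint (Finset.univ.filter (fun p : V × V => p.1 ∈ A ∧ p.2 ∈ A ∧ G.Adj p.1 p.2))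
      (Finset.univ.filter (fun p : V × V => p.1 ∈ A ∧ p.2 ∈ B ∧ G.Adj p.1 p.2)) := by
    rw [Finset.disjoint_left]
    rintro ⟨x, y⟩ h1 h2
    simp only [Finset.mem_filter] at h1 h2
    exact hAB.ne_of_mem h1.2.2.1 h2.2.2.1 rfl
  have hd2 : Disjoint ((Finset.univ.filter (fun p : V × V => p.1 ∈ A ∧ p.2 ∈ A ∧ G.Adj p.1 p.2))
      ∪ (Finset.univ.filter (fun p : V × V => p.1 ∈ A ∧ p.2 ∈ B ∧ G.Adj p.1 p.2)))
      (Finset.univ.filter (fun p : V × V => p.1 ∈ A ∧ p.2 ∈ C ∧ G.Adj p.1 p.2)) := by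
    rw [Finset.disjoint_left]
    rintro ⟨x, y⟩ h1 h2
    simp only [Finset.mem_union, Finset.mem_filter] at h1 h2
    rcases h1 with h1 | h1
    · exact hAC.ne_of_mem h1.2.2.1 h2.2.2.1 rfl
    · exact hBC.ne_of_mem h1.2.2.1 h2.2.2.1 rfl
  rw [← pairs_card_eq_self G A, ← pairs_card_eq G A B hAB, ← pairs_card_eq G A C hAC,
    ← hPcard, hsplit, Finset.card_union_of_disjoint hd2, Finset.card_union_of_disjoint hd1]

end CountingPairs

section Components

variable (G : SimpleGraph V) (K : Set V)

/-- The vertex set (in `V`) of a connected component of the graph induced on `Kᶜ`. -/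
def compSet (C : (G.induce Kᶜ).ConnectedComponent) : Set V :=
  Subtype.val '' {v | (G.induce Kᶜ).connectedComponentMk v = C}

lemma compSet_subset (C : (G.induce Kᶜ).ConnectedComponent) : compSet G K C ⊆ Kᶜ := by
  rintro x ⟨v, -, rfl⟩; exact v.2

lemma iUnion_compSet : (⋃ C, compSet G K C) = Kᶜ := by
  ext x
  simp only [Set.mem_iUnion]
  constructor
  · rintro ⟨C, hC⟩; exact compSet_subset G K C hC
  · intro hx
    exact ⟨(G.induce Kᶜ).connectedComponentMk ⟨x, hx⟩, ⟨x, hx⟩, rfl, rfl⟩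

lemma compSet_disjoint : Pairwise (Function.onFun Disjoint (compSet G K)) := by
  intro C C' hne
  rw [Function.onFun, Set.disjoint_left]
  rintro x ⟨v, hv, rfl⟩ ⟨w, hw, hvw⟩
  have : v = w := Subtype.ext hvw.symm
  subst this
  exact hne (hv.symm.trans hw)

lemma edgeCut_compSet (C : (G.induce Kᶜ).ConnectedComponent) :
    edgeCut G (compSet G K C) = edgesBetween G (compSet G K C) K := by
  ext e
  constructor
  · rintro ⟨a, b, hab, rfl, ha, hb⟩
    refine ⟨a, b, hab, rfl, ha, ?_⟩
    by_contra hbK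
    obtain ⟨va, hva, rfl⟩ := ha
    have hbc : b ∈ Kᶜ := hbK
    have hadj : (G.induce Kᶜ).Adj va ⟨b, hbc⟩ := by simpa using hab
    exact hb ⟨⟨b, hbc⟩, by rw [← hva]; exact (SimpleGraph.ConnectedComponent.sound
      hadj.reachable.symm), rfl⟩
  · rintro ⟨a, b, hab, rfl, ha, hb⟩
    exact ⟨a, b, hab, rfl, ha, fun hbc => (compSet_subset G K C hbc) hb⟩

lemma compSet_ncard (C : (G.induce Kᶜ).ConnectedComponent) :
    (compSet G K C).ncard
      = Nat.card {v : ↥Kᶜ // (G.induce Kᶜ).connectedComponentMk v = C} := by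
  rw [compSet, Set.ncard_image_of_injective _ Subtype.val_injective,
    ← Nat.card_coe_set_eq]
  rfl

lemma sum_edgeCut_compSet [Fintype V] [Fintype (G.induce Kᶜ).ConnectedComponent] :
    ∑ C : (G.induce Kᶜ).ConnectedComponent, (edgeCut G (compSet G K C)).ncard
      = (edgeCut G K).ncard := by
  have h1 : (edgeCut G K).ncard = (edgesBetween G Kᶜ K).ncard := by
    rw [edgeCut_eq_edgesBetween, edgesBetween_comm]
  have h2 : edgesBetween G Kᶜ K = ⋃ C, edgesBetween G (compSet G K C) K := by
    conv_lhs => rw [← iUnion_compSet G K]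
    rw [edgesBetween_iUnion_left]
  rw [h1, h2, ncard_iUnion_of_disjoint _ (fun C C' hne =>
    edgesBetween_disjoint (Or.inl (compSet_disjoint G K hne))
      (Or.inl (Disjoint.mono_left (compSet_subset G K C) disjoint_compl_left)))]
  exact (Finset.sum_congr rfl fun C _ => by rw [edgeCut_compSet]).symm

end Components

lemma factorCritical_odd {W : Type} [Finite W] [Nonempty W] (G : SimpleGraph W)
    (h : FactorCritical G) : Odd (Nat.card W) := by
  classical
  haveI := Fintype.ofFinite W
  obtain ⟨M, hM, hverts⟩ := h (Classical.arbitrary W)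
  haveI : Fintype M.verts := Fintype.ofFinite _
  have heven : Even (M.verts.ncard) := by
    rw [Set.ncard_eq_toFinset_card']
    exact hM.even_card
  rw [hverts] at heven
  have h1 : ({Classical.arbitrary W} : Set W).ncard
      + ({Classical.arbitrary W}ᶜ : Set W).ncard = Nat.card W :=
    Set.ncard_add_ncard_compl _
  rw [Set.ncard_singleton] at h1
  obtain ⟨k, hk⟩ := heven
  exact ⟨k, by omega⟩

lemma exists_edge_of_mem_support_s16 {G : SimpleGraph V} {u v x : V} (w : G.Walk u v)
    (hw : ¬ w.Nil) (hx : x ∈ w.support) : ∃ e ∈ w.edges, x ∈ e := by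
  induction w with
  | nil => simp at hw
  | @cons a b c h p ih =>
    rw [SimpleGraph.Walk.support_cons, List.mem_cons] at hx
    rcases hx with rfl | hx
    · exact ⟨s(x, b), by simp, by simp⟩
    · by_cases hp : p.Nil
      · have : x = b := by
          cases p with
          | nil => simpa using hx
          | cons h' q => exact absurd hp SimpleGraph.Walk.not_nil_cons
        subst this
        exact ⟨s(a, x), by simp, by simp⟩
      · obtain ⟨e, he, hxe⟩ := ih hp hx
        exact ⟨e, by simp [he], hxe⟩

lemma cycle_vert_card_eq_edge_card {G : SimpleGraph V} {v : V} (w : G.Walk v v)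
    (hw : w.IsCycle) : {x | ∃ e ∈ w.edges, x ∈ e}.ncard = {e | e ∈ w.edges}.ncard := by
  classical
  have hvs : {x | ∃ e ∈ w.edges, x ∈ e} = {x | x ∈ w.support} := by
    ext x
    constructor
    · rintro ⟨e, he, hxe⟩
      induction e with
      | h a b =>
        rcases Sym2.mem_iff.mp hxe with rfl | rfl
        · exact SimpleGraph.Walk.fst_mem_support_of_mem_edges w he
        · exact SimpleGraph.Walk.snd_mem_support_of_mem_edges w he
    · intro hx
      exact exists_edge_of_mem_support_s16 w hw.not_nil hx
  rw [hvs]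
  have h1 : {x | x ∈ w.support} = ↑w.support.toFinset := by ext x; simp
  have h2 : {e | e ∈ w.edges} = ↑w.edges.toFinset := by ext e; simp
  rw [h1, h2, Set.ncard_coe_finset, Set.ncard_coe_finset]
  obtain ⟨htrail, hnil, hnodup⟩ := (SimpleGraph.Walk.isCycle_def w).mp hw
  cases w with
  | nil => exact absurd rfl hnil
  | @cons a b c h p =>
    rw [SimpleGraph.Walk.support_cons, List.tail_cons] at hnodup
    rw [SimpleGraph.Walk.support_cons, List.toFinset_cons,
      Finset.insert_eq_self.mpr (by simp [SimpleGraph.Walk.end_mem_support]),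
      List.toFinset_card_of_nodup hnodup,
      List.toFinset_card_of_nodup htrail.edges_nodup,
      SimpleGraph.Walk.length_edges, SimpleGraph.Walk.length_support,
      SimpleGraph.Walk.length_cons]

end Helpers

section MainHelpers

open scoped Classical

variable {V : Type}

lemma faceVerts_ncard_eq {V : Type} [Fintype V] (Fu : Fullerene V) (f : Fu.faces.Face) :
    (Fu.faceVerts f).ncard = (Fu.faces.boundary f).ncard := by
  obtain ⟨v, w, hcyc, hbd⟩ := Fu.faces.boundary_cycle f
  have h1 : Fu.faceVerts f = {x | ∃ e ∈ w.edges, x ∈ e} := by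
    ext x
    constructor
    · rintro ⟨e, he, hxe⟩; exact ⟨e, (hbd e).mp he, hxe⟩
    · rintro ⟨e, he, hxe⟩; exact ⟨e, (hbd e).mpr he, hxe⟩
  have h2 : Fu.faces.boundary f = {e | e ∈ w.edges} := Set.ext hbd
  rw [h1, h2, cycle_vert_card_eq_edge_card w hcyc]

lemma cubic_even_card {V : Type} [Fintype V] (G : SimpleGraph V)
    (h3 : ∀ v : V, Nat.card {w // G.Adj v w} = 3) : Even (Fintype.card V) := by
  classical
  have hdeg : ∀ v : V, G.degree v = 3 := by
    intro v
    rw [← h3 v, ← SimpleGraph.card_neighborSet_eq_degree, Nat.card_eq_fintype_card]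
    rfl
  have hs := SimpleGraph.sum_degrees_eq_twice_card_edges G
  rw [Finset.sum_congr rfl (fun v _ => hdeg v), Finset.sum_const, Finset.card_univ,
    smul_eq_mul] at hs
  rw [Nat.even_iff]
  omega

end MainHelpers

/-- Let `H` be the vertex set of two disjoint hexagons of a fullerene graph and `A` a
vertex set of `F - H` such that every component of `F - H - A` is factor-critical and
there are more components than `|A|`.  Then
`|E(A,H)| + |E(A,A)| + s(D) ≤ |∇(H)|/2 - 3`,
where `s(D) = Σ_{F* ∈ D} (|∇(F*)| - 3)/2` runs over the components of `F - H - A`. -/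
theorem matching_counting_inequality {V : Type} [Fintype V] (Fu : Fullerene V)
    (h₁ h₂ : Fu.faces.Face)
    (hh₁ : (Fu.faces.boundary h₁).ncard = 6) (hh₂ : (Fu.faces.boundary h₂).ncard = 6)
    (hdisj : Disjoint (Fu.faceVerts h₁) (Fu.faceVerts h₂))
    (A : Set V) (hA : Disjoint A (Fu.faceVerts h₁ ∪ Fu.faceVerts h₂))
    (hfc : ∀ C : (Fu.G.induce ((Fu.faceVerts h₁ ∪ Fu.faceVerts h₂) ∪ A)ᶜ).ConnectedComponent,
      FactorCritical ((Fu.G.induce ((Fu.faceVerts h₁ ∪ Fu.faceVerts h₂) ∪ A)ᶜ).induce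
        {v | (Fu.G.induce ((Fu.faceVerts h₁ ∪ Fu.faceVerts h₂) ∪ A)ᶜ).connectedComponentMk v = C}))
    (hmore : A.ncard <
      Nat.card (Fu.G.induce ((Fu.faceVerts h₁ ∪ Fu.faceVerts h₂) ∪ A)ᶜ).ConnectedComponent) :
    ((edgesBetween Fu.G A (Fu.faceVerts h₁ ∪ Fu.faceVerts h₂)).ncard : ℚ) +
      ((edgesBetween Fu.G A A).ncard : ℚ) +
      (∑ᶠ C : (Fu.G.induce ((Fu.faceVerts h₁ ∪ Fu.faceVerts h₂) ∪ A)ᶜ).ConnectedComponent,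
        (((edgeCut Fu.G (Subtype.val ''
          {v | (Fu.G.induce ((Fu.faceVerts h₁ ∪ Fu.faceVerts h₂) ∪ A)ᶜ).connectedComponentMk v
            = C})).ncard : ℚ) - 3) / 2) ≤
    ((edgeCut Fu.G (Fu.faceVerts h₁ ∪ Fu.faceVerts h₂)).ncard : ℚ) / 2 - 3 := by
  classical
  set H := Fu.faceVerts h₁ ∪ Fu.faceVerts h₂ with hH
  set K := H ∪ A with hK
  -- basic disjointness
  have hAH : Disjoint A H := hA
  have hHA : Disjoint H A := hA.symm
  have hAR : Disjoint A Kᶜ := Disjoint.mono_left Set.subset_union_right disjoint_compl_right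
  have hHR : Disjoint H Kᶜ := Disjoint.mono_left Set.subset_union_left disjoint_compl_right
  have hHc : Hᶜ = A ∪ Kᶜ := by
    ext x
    have hxAH : x ∈ A → x ∉ H := fun h1 h2 => hAH.ne_of_mem h1 h2 rfl
    simp only [hK, Set.mem_compl_iff, Set.mem_union]
    tauto
  have hU : A ∪ H ∪ Kᶜ = Set.univ := by
    ext x
    simp only [hK, Set.mem_union, Set.mem_compl_iff, Set.mem_univ, iff_true]
    tauto
  -- edge-counting identities
  have cutH : (edgeCut Fu.G H).ncard
      = (edgesBetween Fu.G H A).ncard + (edgesBetween Fu.G H Kᶜ).ncard := by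
    rw [edgeCut_eq_edgesBetween, hHc, edgesBetween_union_right,
      Set.ncard_union_eq (edgesBetween_disjoint (Or.inr hAR) (Or.inl hHR))
        (Set.toFinite _) (Set.toFinite _)]
  have cutK : (edgeCut Fu.G K).ncard
      = (edgesBetween Fu.G H Kᶜ).ncard + (edgesBetween Fu.G A Kᶜ).ncard := by
    rw [edgeCut_eq_edgesBetween, hK, edgesBetween_union_left,
      Set.ncard_union_eq (edgesBetween_disjoint (Or.inl hHA) (Or.inl hHR))
        (Set.toFinite _) (Set.toFinite _)]
  have degsum : 3 * A.ncard = 2 * (edgesBetween Fu.G A A).ncard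
      + (edgesBetween Fu.G A H).ncard + (edgesBetween Fu.G A Kᶜ).ncard :=
    degree_sum_split Fu.G Fu.cubic A H Kᶜ hU hAH hAR hHR
  have comm : (edgesBetween Fu.G H A).ncard = (edgesBetween Fu.G A H).ncard := by
    rw [edgesBetween_comm]
  have key1 : (edgeCut Fu.G K).ncard + 2 * (edgesBetween Fu.G A H).ncard
      + 2 * (edgesBetween Fu.G A A).ncard = (edgeCut Fu.G H).ncard + 3 * A.ncard := by
    omega
  -- components
  have sumcut : ∑ C : (Fu.G.induce Kᶜ).ConnectedComponent,
      (edgeCut Fu.G (compSet Fu.G K C)).ncard = (edgeCut Fu.G K).ncard :=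
    sum_edgeCut_compSet Fu.G K
  have compOdd : ∀ C : (Fu.G.induce Kᶜ).ConnectedComponent,
      Odd ((compSet Fu.G K C).ncard) := by
    intro C
    obtain ⟨v₀, hv₀⟩ := C.exists_rep
    haveI : Nonempty {v : ↥Kᶜ //
        v ∈ {v | (Fu.G.induce Kᶜ).connectedComponentMk v = C}} := ⟨⟨v₀, hv₀⟩⟩
    have hodd := factorCritical_odd _ (hfc C)
    rw [compSet_ncard]
    exact hodd
  have sumverts : ∑ C : (Fu.G.induce Kᶜ).ConnectedComponent,
      (compSet Fu.G K C).ncard = Kᶜ.ncard := by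
    have h := ncard_iUnion_of_disjoint (compSet Fu.G K) (compSet_disjoint Fu.G K)
    rw [iUnion_compSet] at h
    exact h.symm
  have hmod : (∑ C : (Fu.G.induce Kᶜ).ConnectedComponent, (compSet Fu.G K C).ncard) % 2
      = (Fintype.card (Fu.G.induce Kᶜ).ConnectedComponent) % 2 := by
    rw [Finset.sum_nat_mod,
      Finset.sum_congr rfl (fun C _ => Nat.odd_iff.mp (compOdd C)),
      Finset.sum_const, Finset.card_univ, smul_eq_mul, mul_one]
  have cardH : H.ncard = 12 := by
    rw [hH, Set.ncard_union_eq hdisj (Set.toFinite _) (Set.toFinite _),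
      faceVerts_ncard_eq, faceVerts_ncard_eq, hh₁, hh₂]
  have cardK : K.ncard = 12 + A.ncard := by
    rw [hK, Set.ncard_union_eq hHA (Set.toFinite _) (Set.toFinite _), cardH]
  have cardKc : K.ncard + Kᶜ.ncard = Fintype.card V := by
    rw [Set.ncard_add_ncard_compl, Nat.card_eq_fintype_card]
  have evenV := cubic_even_card Fu.G Fu.cubic
  have hmore' : A.ncard < Fintype.card (Fu.G.induce Kᶜ).ConnectedComponent := by
    rwa [Nat.card_eq_fintype_card] at hmore
  have hcge : A.ncard + 2 ≤ Fintype.card (Fu.G.induce Kᶜ).ConnectedComponent := by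
    obtain ⟨m, hm⟩ := evenV
    omega
  -- final rational computation
  suffices hgoal : ((edgesBetween Fu.G A H).ncard : ℚ) + ((edgesBetween Fu.G A A).ncard : ℚ) +
      (∑ᶠ C : (Fu.G.induce Kᶜ).ConnectedComponent,
        (((edgeCut Fu.G (compSet Fu.G K C)).ncard : ℚ) - 3) / 2) ≤
      ((edgeCut Fu.G H).ncard : ℚ) / 2 - 3 from hgoal
  rw [finsum_eq_sum_of_fintype]
  have hsum : (∑ C : (Fu.G.induce Kᶜ).ConnectedComponent,
      (((edgeCut Fu.G (compSet Fu.G K C)).ncard : ℚ) - 3) / 2)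
      = (((edgeCut Fu.G K).ncard : ℚ)
        - 3 * (Fintype.card (Fu.G.induce Kᶜ).ConnectedComponent)) / 2 := by
    rw [← Finset.sum_div, Finset.sum_sub_distrib, Finset.sum_const, Finset.card_univ,
      ← Nat.cast_sum, sumcut]
    ring_nf
  rw [hsum]
  have k1 : ((edgeCut Fu.G K).ncard : ℚ) + 2 * ((edgesBetween Fu.G A H).ncard : ℚ)
      + 2 * ((edgesBetween Fu.G A A).ncard : ℚ)
      = ((edgeCut Fu.G H).ncard : ℚ) + 3 * (A.ncard : ℚ) := by
    exact_mod_cast congrArg (fun n : ℕ => (n : ℚ)) key1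
  have k2 : ((A.ncard : ℚ)) + 2 ≤ ((Fintype.card (Fu.G.induce Kᶜ).ConnectedComponent : ℕ) : ℚ) := by
    exact_mod_cast hcge
  linarith
end
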